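/- arXiv:2312.16049 — 6 statements merged into one kernel-verified Lean document; each statement's English description precedes it below -/
import Mathlib

section
/- Fix integers r ≥ 1 and a ≥ 1, and define recursively in ℚ⟦z⟧: φ_{−1} := z^a and, for m ≥ 0, φ_m := z·(1 − r·z^r)^{−1}·(d/dz φ_{m−1}). Then for every integer m ≥ −1 and every n ≥ 0, the coefficient of z^n in φ_m equals the (finite) sum over integers j ≥ 0 with j·r + a ≤ n of (a·(j·r + a)^{j+m}/j!) times the coefficient of z^{n−(j·r+a)} in exp(−(j·r+a)·z^r); in other words, coefficientwise in ℚ⟦z⟧ one has φ_m = Σ_{j ≥ 0} (a·(j·r+a)^{j+m}/j!)·(z·exp(−z^r))^{j·r+a}, where for j = 0 and m = −1 the factor a·(j·r+a)^{j+m} is interpreted as a·a^{−1} = 1 in ℚ. -/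
/-!
STATEMENT 0. The basis functions `φ_m^a` attached to the spectral curve
`x(z) = ln z − z^r` : in `ℚ⟦z⟧` set `φ_{−1} = z^a` and
`φ_m = z·(1 − r z^r)⁻¹·(d/dz φ_{m−1})`.  We index them by `k : ℕ`, with
`phi r a k = φ_{k−1}`.  The claimed expansion is
`φ_m = Σ_{j ≥ 0} (a(jr+a)^{j+m}/j!)·(z e^{−z^r})^{jr+a}`, stated coefficientwise.
-/

open PowerSeries

/-- The formal power series `exp (c · z^r)` in `ℚ⟦z⟧`. -/
noncomputable def expPow (c : ℚ) (r : ℕ) : PowerSeries ℚ :=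
  PowerSeries.mk fun n => if r ∣ n then c ^ (n / r) / ((n / r).factorial : ℚ) else 0

/-- `phi r a k` is the series `φ_{k-1}^a`:  `φ_{-1} = z^a` and
`φ_m = z (1 - r z^r)⁻¹ (d/dz φ_{m-1})`. -/
noncomputable def phi (r a : ℕ) : ℕ → PowerSeries ℚ
  | 0 => PowerSeries.X ^ a
  | k + 1 =>
      PowerSeries.X * (1 - (r : ℚ) • PowerSeries.X ^ r)⁻¹ *
        PowerSeries.derivative ℚ (phi r a k)

open Finset in
lemma coeff_expPow (c : ℚ) (r n : ℕ) :
    PowerSeries.coeff n (expPow c r) =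
      if r ∣ n then c ^ (n / r) / ((n / r).factorial : ℚ) else 0 := by
  simp [expPow]

lemma coeff_expPow_zero (c : ℚ) (r : ℕ) : PowerSeries.coeff 0 (expPow c r) = 1 := by
  simp [coeff_expPow]

lemma expPow_key (c : ℚ) (r d : ℕ) (hr : 1 ≤ r) (hrd : r ≤ d) :
    (d : ℚ) * PowerSeries.coeff d (expPow c r) =
      c * r * PowerSeries.coeff (d - r) (expPow c r) := by
  by_cases h : r ∣ d
  · have h2 : r ∣ d - r := Nat.dvd_sub h dvd_rfl
    rw [coeff_expPow, coeff_expPow, if_pos h, if_pos h2]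
    set q := d / r with hq
    have hq1 : 1 ≤ q := (Nat.one_le_div_iff (by omega)).2 hrd
    have hdq : d = q * r := (Nat.div_mul_cancel h).symm
    have hq2 : (d - r) / r = q - 1 := by
      have hsub : d - r = (q - 1) * r := by rw [hdq, Nat.sub_mul, one_mul]
      rw [hsub, Nat.mul_div_cancel _ (by omega)]
    rw [hq2]
    have hfac : (q.factorial : ℚ) = q * (q - 1).factorial := by
      have := Nat.mul_factorial_pred (by omega : q ≠ 0)
      push_cast [← this]; ring
    have hpow : c ^ q = c * c ^ (q - 1) := by
      conv_lhs => rw [show q = (q - 1) + 1 by omega]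
      rw [pow_succ]; ring
    have hqQ : (q : ℚ) ≠ 0 := by positivity
    have hfQ : ((q - 1).factorial : ℚ) ≠ 0 := Nat.cast_ne_zero.2 (Nat.factorial_ne_zero _)
    rw [hdq, hfac, hpow]
    push_cast
    field_simp
  · have h2 : ¬ r ∣ d - r := by
      intro hc
      have : d - r + r = d := Nat.sub_add_cancel hrd
      exact h (this ▸ Nat.dvd_add hc dvd_rfl)
    rw [coeff_expPow, coeff_expPow, if_neg h, if_neg h2]
    ring

/-- the `j`-th term value. -/
noncomputable def tval (r a k j m : ℕ) : ℚ :=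
  (a : ℚ) * ((j * r + a : ℕ) : ℚ) ^ ((j : ℤ) + (k : ℤ) - 1) / (j.factorial : ℚ) *
    PowerSeries.coeff (m - (j * r + a)) (expPow (-((j * r + a : ℕ) : ℚ)) r)

noncomputable def Sfun (r a k n : ℕ) : ℚ :=
  ∑ j ∈ Finset.range (n + 1), if j * r + a ≤ n then tval r a k j n else 0

noncomputable def G (r a k : ℕ) : PowerSeries ℚ := PowerSeries.mk (Sfun r a k)

lemma tval_step (r a : ℕ) (hr : 1 ≤ r) (ha : 1 ≤ a) (k j n : ℕ) :
    (if j * r + a ≤ n then tval r a (k + 1) j n else 0)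
      - (r : ℚ) * (if r ≤ n ∧ j * r + a ≤ n - r then tval r a (k + 1) j (n - r) else 0)
    = (n : ℚ) * (if j * r + a ≤ n then tval r a k j n else 0) := by
  set N := j * r + a with hN
  have hN0 : ((N : ℕ) : ℚ) ≠ 0 := Nat.cast_ne_zero.2 (by omega)
  have hzp : ((N : ℕ) : ℚ) ^ ((j : ℤ) + ((k + 1 : ℕ) : ℤ) - 1)
      = ((N : ℕ) : ℚ) * ((N : ℕ) : ℚ) ^ ((j : ℤ) + (k : ℤ) - 1) := by
    have : (j : ℤ) + ((k + 1 : ℕ) : ℤ) - 1 = ((j : ℤ) + (k : ℤ) - 1) + 1 := by push_cast; ring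
    rw [this, zpow_add_one₀ hN0]; ring
  by_cases h1 : N ≤ n
  · rw [if_pos h1, if_pos h1]
    by_cases h2 : N + r ≤ n
    · have hrn : r ≤ n := by omega
      have h3 : N ≤ n - r := by omega
      rw [if_pos ⟨hrn, h3⟩]
      have hd2 : n - r - N = (n - N) - r := by omega
      have hrd : r ≤ n - N := by omega
      have key := expPow_key (-((N : ℕ) : ℚ)) r (n - N) hr hrd
      have hcast : ((n - N : ℕ) : ℚ) = (n : ℚ) - ((N : ℕ) : ℚ) := by
        push_cast [h1]; ring
      rw [hcast] at key
      simp only [tval, ← hN, hzp, hd2]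
      set E1 := PowerSeries.coeff (n - N) (expPow (-((N : ℕ) : ℚ)) r) with hE1
      set E2 := PowerSeries.coeff (n - N - r) (expPow (-((N : ℕ) : ℚ)) r) with hE2
      set z := ((N : ℕ) : ℚ) ^ ((j : ℤ) + (k : ℤ) - 1) with hz
      have hfj : ((j.factorial : ℕ) : ℚ) ≠ 0 := Nat.cast_ne_zero.2 (Nat.factorial_ne_zero _)
      linear_combination (-(a : ℚ) * z / (j.factorial : ℚ)) * key
    · have hneg : ¬(r ≤ n ∧ N ≤ n - r) := by omega
      rw [if_neg hneg, mul_zero, sub_zero]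
      simp only [tval, ← hN, hzp]
      by_cases h0 : n = N
      · subst h0
        rw [Nat.sub_self, coeff_expPow_zero]
        ring
      · have hlt : 0 < n - N ∧ n - N < r := by omega
        have hnd : ¬ r ∣ (n - N) := by
          intro hc
          have := Nat.le_of_dvd hlt.1 hc
          omega
        rw [coeff_expPow, if_neg hnd]
        ring
  · have hneg : ¬(r ≤ n ∧ N ≤ n - r) := by omega
    simp [if_neg h1, if_neg hneg]

lemma Sfun_step (r a : ℕ) (hr : 1 ≤ r) (ha : 1 ≤ a) (k n : ℕ) :
    Sfun r a (k + 1) n - (r : ℚ) * (if r ≤ n then Sfun r a (k + 1) (n - r) else 0)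
      = (n : ℚ) * Sfun r a k n := by
  have hsec : (if r ≤ n then Sfun r a (k + 1) (n - r) else 0)
      = ∑ j ∈ Finset.range (n + 1),
          (if r ≤ n ∧ j * r + a ≤ n - r then tval r a (k + 1) j (n - r) else 0) := by
    by_cases hrn : r ≤ n
    · rw [if_pos hrn]
      unfold Sfun
      rw [Finset.sum_subset (Finset.range_subset_range.2 (show n - r + 1 ≤ n + 1 by omega))]
      · exact Finset.sum_congr rfl fun j _ => by simp [hrn]
      · intro x _ hx2
        rw [Finset.mem_range, not_lt] at hx2
        have hxr : x ≤ x * r := Nat.le_mul_of_pos_right x (by omega)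
        rw [if_neg (by omega)]
    · rw [if_neg hrn]
      symm
      exact Finset.sum_eq_zero fun j _ => by rw [if_neg (by tauto)]
  rw [hsec]
  unfold Sfun
  rw [Finset.mul_sum, Finset.mul_sum, ← Finset.sum_sub_distrib]
  exact Finset.sum_congr rfl fun j _ => tval_step r a hr ha k j n

lemma G_step (r a : ℕ) (hr : 1 ≤ r) (ha : 1 ≤ a) (k : ℕ) :
    (1 - (r : ℚ) • PowerSeries.X ^ r) * G r a (k + 1)
      = PowerSeries.X * PowerSeries.derivative ℚ (G r a k) := by
  ext n
  rw [sub_mul, one_mul, map_sub, smul_mul_assoc, map_smul, smul_eq_mul,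
    PowerSeries.coeff_X_pow_mul']
  rw [show (PowerSeries.X : ℚ⟦X⟧) * PowerSeries.derivative ℚ (G r a k)
      = PowerSeries.X ^ 1 * PowerSeries.derivative ℚ (G r a k) by rw [pow_one]]
  rw [PowerSeries.coeff_X_pow_mul']
  simp only [PowerSeries.coeff_mk, G]
  by_cases h1 : 1 ≤ n
  · rw [if_pos h1, PowerSeries.coeff_derivative, PowerSeries.coeff_mk,
      show n - 1 + 1 = n by omega]
    rw [mul_comm (Sfun r a k n) _, Nat.cast_sub h1]
    rw [show ((n : ℚ) - (1 : ℕ) + 1) = (n : ℚ) by push_cast; ring]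
    exact Sfun_step r a hr ha k n
  · have hn0 : n = 0 := by omega
    subst hn0
    rw [if_neg (by omega)]
    have h := Sfun_step r a hr ha k 0
    rw [if_neg (by omega : ¬ r ≤ 0)] at h
    simpa using h

open scoped fwdDiff

lemma fwdDiff_iter_zero_fun (t : ℕ) : (Δ_[1])^[t] (fun _ : ℕ => (0 : ℚ)) = fun _ => 0 := by
  induction t with
  | zero => simp
  | succ t ih => rw [Function.iterate_succ_apply, show Δ_[(1:ℕ)] (fun _ : ℕ => (0:ℚ)) = fun _ => 0
      from funext fun _ => by simp [fwdDiff], ih]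

lemma fwdDiff_iter_poly (t : ℕ) :
    ∀ P : Polynomial ℚ, (P = 0 ∨ P.natDegree < t) →
      (Δ_[1])^[t] (fun j : ℕ => P.eval (j : ℚ)) = fun _ => 0 := by
  induction t with
  | zero =>
    intro P hP
    have hP0 : P = 0 := by rcases hP with h | h; exact h; omega
    subst hP0
    simpa using fwdDiff_iter_zero_fun 0
  | succ t ih =>
    intro P hP
    by_cases hP0 : P = 0
    · subst hP0
      simpa using fwdDiff_iter_zero_fun (t + 1)
    · have hdeg : P.natDegree < t + 1 := by tauto
      rw [Function.iterate_succ_apply]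
      have hΔ : Δ_[1] (fun j : ℕ => P.eval (j : ℚ))
          = fun j : ℕ => (P.comp (Polynomial.X + 1) - P).eval (j : ℚ) := by
        funext j
        simp only [fwdDiff, Polynomial.eval_sub, Polynomial.eval_comp, Polynomial.eval_add,
          Polynomial.eval_X, Polynomial.eval_one]
        push_cast
        ring
      rw [hΔ]
      apply ih
      set Q := P.comp (Polynomial.X + 1) - P with hQdef
      by_cases hQ : Q = 0
      · exact Or.inl hQ
      · right
        have hX1 : (Polynomial.X + 1 : Polynomial ℚ).natDegree = 1 := by
          simpa using Polynomial.natDegree_X_add_C (1 : ℚ)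
        have hcompdeg : (P.comp (Polynomial.X + 1)).natDegree = P.natDegree := by
          rw [Polynomial.natDegree_comp, hX1, mul_one]
        have hlc : (P.comp (Polynomial.X + 1)).leadingCoeff = P.leadingCoeff := by
          rw [Polynomial.leadingCoeff_comp (by rw [hX1]; omega)]
          have : (Polynomial.X + 1 : Polynomial ℚ).leadingCoeff = 1 := by
            simpa using Polynomial.leadingCoeff_X_add_C (1 : ℚ)
          rw [this, one_pow, mul_one]
        have hcomp0 : P.comp (Polynomial.X + 1) ≠ 0 := by
          intro hc
          apply hP0
          have := hlc
          rw [hc, Polynomial.leadingCoeff_zero] at this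
          exact Polynomial.leadingCoeff_eq_zero.mp this.symm
        have hdd : (P.comp (Polynomial.X + 1)).degree = P.degree := by
          rw [Polynomial.degree_eq_natDegree hcomp0, Polynomial.degree_eq_natDegree hP0, hcompdeg]
        have hlt : Q.degree < (P.comp (Polynomial.X + 1)).degree :=
          Polynomial.degree_sub_lt hdd hcomp0 hlc
        have : Q.natDegree < (P.comp (Polynomial.X + 1)).natDegree :=
          Polynomial.natDegree_lt_natDegree hQ hlt
        omega

lemma alt_sum (r a t : ℕ) (ht : 1 ≤ t) :
    ∑ j ∈ Finset.range (t + 1),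
      (((-1 : ℤ) ^ (t - j) * (t.choose j : ℤ) : ℤ) : ℚ) *
        ((a : ℚ) * (((j * r + a : ℕ)) : ℚ) ^ (t - 1)) = 0 := by
  set P : Polynomial ℚ :=
    Polynomial.C (a : ℚ) * (Polynomial.C (r : ℚ) * Polynomial.X + Polynomial.C (a : ℚ)) ^ (t - 1)
    with hP
  have hdeg : P.natDegree < t := by
    have h1 : (Polynomial.C (r : ℚ) * Polynomial.X + Polynomial.C (a : ℚ)).natDegree ≤ 1 := by
      apply le_trans (Polynomial.natDegree_add_le _ _)
      simp [Polynomial.natDegree_C_mul_le]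
      exact le_trans (Polynomial.natDegree_C_mul_le _ _) (by simp)
    calc P.natDegree ≤ ((Polynomial.C (r : ℚ) * Polynomial.X + Polynomial.C (a : ℚ)) ^ (t - 1)).natDegree :=
          Polynomial.natDegree_C_mul_le _ _
      _ ≤ (t - 1) * (Polynomial.C (r : ℚ) * Polynomial.X + Polynomial.C (a : ℚ)).natDegree :=
          Polynomial.natDegree_pow_le
      _ ≤ (t - 1) * 1 := Nat.mul_le_mul_left _ h1
      _ < t := by omega
  have heval : ∀ j : ℕ, P.eval (j : ℚ) = (a : ℚ) * (((j * r + a : ℕ)) : ℚ) ^ (t - 1) := by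
    intro j
    simp only [hP, Polynomial.eval_mul, Polynomial.eval_pow, Polynomial.eval_add,
      Polynomial.eval_C, Polynomial.eval_X]
    push_cast
    ring_nf
  have hzero := fwdDiff_iter_poly t P (Or.inr hdeg)
  have hsum := fwdDiff_iter_eq_sum_shift (1 : ℕ) (fun j : ℕ => P.eval (j : ℚ)) t 0
  rw [hzero] at hsum
  simp only [zero_add, smul_eq_mul, mul_one] at hsum
  have : (0 : ℚ) = ∑ k ∈ Finset.range (t + 1),
      ((-1 : ℤ) ^ (t - k) * (t.choose k : ℤ)) • P.eval ((k : ℕ) : ℚ) := by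
    simpa using hsum
  rw [eq_comm] at this
  calc ∑ j ∈ Finset.range (t + 1),
        (((-1 : ℤ) ^ (t - j) * (t.choose j : ℤ) : ℤ) : ℚ) *
          ((a : ℚ) * (((j * r + a : ℕ)) : ℚ) ^ (t - 1))
      = ∑ j ∈ Finset.range (t + 1),
        ((-1 : ℤ) ^ (t - j) * (t.choose j : ℤ)) • P.eval ((j : ℕ) : ℚ) := by
        refine Finset.sum_congr rfl fun j _ => ?_
        rw [heval j, zsmul_eq_mul]
    _ = 0 := this

lemma G_base (r a : ℕ) (hr : 1 ≤ r) (ha : 1 ≤ a) : G r a 0 = PowerSeries.X ^ a := by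
  ext n
  rw [PowerSeries.coeff_X_pow]
  simp only [G, PowerSeries.coeff_mk]
  unfold Sfun
  rcases lt_trichotomy n a with h | h | h
  · rw [if_neg (by omega)]
    exact Finset.sum_eq_zero fun j _ => by rw [if_neg (by omega)]
  · subst h
    rw [if_pos rfl, Finset.sum_eq_single 0]
    · rw [if_pos (by omega)]
      unfold tval
      simp only [zero_mul, zero_add, Nat.sub_self, coeff_expPow_zero, Nat.factorial_zero,
        Nat.cast_zero, Nat.cast_one, mul_one, div_one]
      rw [show ((0:ℤ) - 1) = -1 by ring, zpow_neg, zpow_one]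
      exact mul_inv_cancel₀ (Nat.cast_ne_zero.2 (by omega))
    · intro j _ hj0
      have h1 : 1 ≤ j := Nat.one_le_iff_ne_zero.2 hj0
      have h2 : j ≤ j * r := Nat.le_mul_of_pos_right j (by omega)
      rw [if_neg (by omega)]
    · intro h0
      exact absurd (Finset.mem_range.2 (by omega)) h0
  · rw [if_neg (by omega)]
    by_cases hdvd : r ∣ (n - a)
    · obtain ⟨t, htdef⟩ := hdvd
      rw [mul_comm] at htdef
      have ht1 : 1 ≤ t := by
        rcases Nat.eq_zero_or_pos t with h0 | h0
        · subst h0; simp at htdef; omega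
        · exact h0
      have hn : n = t * r + a := by rw [← htdef]; omega
      have htr : t ≤ t * r := Nat.le_mul_of_pos_right t (by omega)
      rw [← Finset.sum_subset (Finset.range_subset_range.2 (show t + 1 ≤ n + 1 by omega))]
      · have key := alt_sum r a t ht1
        calc ∑ j ∈ Finset.range (t + 1), (if j * r + a ≤ n then tval r a 0 j n else 0)
            = ∑ j ∈ Finset.range (t + 1),
                (1 / (t.factorial : ℚ)) *
                  ((((-1 : ℤ) ^ (t - j) * (t.choose j : ℤ) : ℤ) : ℚ) *
                    ((a : ℚ) * (((j * r + a : ℕ)) : ℚ) ^ (t - 1))) := by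
              refine Finset.sum_congr rfl fun j hj => ?_
              rw [Finset.mem_range] at hj
              have hjt : j ≤ t := by omega
              have hjr : j * r ≤ t * r := Nat.mul_le_mul_right r hjt
              rw [if_pos (by omega)]
              unfold tval
              have hsub : n - (j * r + a) = (t - j) * r := by
                have h2 := Nat.sub_mul t j r
                omega
              rw [hsub, coeff_expPow, if_pos (dvd_mul_left r (t - j)),
                Nat.mul_div_cancel _ (by omega : 0 < r)]
              have hN0 : ((j * r + a : ℕ) : ℚ) ≠ 0 := Nat.cast_ne_zero.2 (by omega)
              have hz : ((j * r + a : ℕ) : ℚ) ^ ((j : ℤ) + ((0 : ℕ) : ℤ) - 1) *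
                  ((j * r + a : ℕ) : ℚ) ^ (t - j) = ((j * r + a : ℕ) : ℚ) ^ (t - 1) := by
                rw [← zpow_natCast ((j * r + a : ℕ) : ℚ) (t - j), ← zpow_add₀ hN0,
                  ← zpow_natCast ((j * r + a : ℕ) : ℚ) (t - 1)]
                congr 1
                push_cast [Nat.cast_sub hjt, Nat.cast_sub ht1]
                ring
              rw [neg_pow, ← hz]
              have hf1 : ((j.factorial : ℕ) : ℚ) ≠ 0 := Nat.cast_ne_zero.2 (Nat.factorial_ne_zero _)
              have hf2 : (((t - j).factorial : ℕ) : ℚ) ≠ 0 :=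
                Nat.cast_ne_zero.2 (Nat.factorial_ne_zero _)
              have hf3 : ((t.factorial : ℕ) : ℚ) ≠ 0 := Nat.cast_ne_zero.2 (Nat.factorial_ne_zero _)
              push_cast [Nat.cast_choose ℚ hjt]
              field_simp
          _ = (1 / (t.factorial : ℚ)) *
              ∑ j ∈ Finset.range (t + 1),
                ((((-1 : ℤ) ^ (t - j) * (t.choose j : ℤ) : ℤ) : ℚ) *
                  ((a : ℚ) * (((j * r + a : ℕ)) : ℚ) ^ (t - 1))) := by
              rw [Finset.mul_sum]
          _ = 0 := by rw [key, mul_zero]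
      · intro x _ hx2
        rw [Finset.mem_range, not_lt] at hx2
        have h2 := Nat.mul_le_mul_right r (show t + 1 ≤ x by omega)
        rw [add_mul, one_mul] at h2
        rw [if_neg (by omega)]
    · apply Finset.sum_eq_zero
      intro j _
      by_cases hc : j * r + a ≤ n
      · rw [if_pos hc]
        unfold tval
        have hnd : ¬ r ∣ (n - (j * r + a)) := by
          intro hcon
          apply hdvd
          have h2 : n - a = (n - (j * r + a)) + j * r := by omega
          rw [h2]
          exact Nat.dvd_add hcon (dvd_mul_left r j)
        rw [coeff_expPow, if_neg hnd, mul_zero]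
      · rw [if_neg hc]

lemma phi_eq (r a : ℕ) (hr : 1 ≤ r) (ha : 1 ≤ a) (k : ℕ) : phi r a k = G r a k := by
  induction k with
  | zero =>
    simp only [phi]
    exact (G_base r a hr ha).symm
  | succ k ih =>
    have hu : PowerSeries.constantCoeff ((1 - (r : ℚ) • PowerSeries.X ^ r : ℚ⟦X⟧)) ≠ 0 := by
      rw [smul_eq_C_mul, map_sub, map_one, map_mul, constantCoeff_C, map_pow, constantCoeff_X,
        zero_pow (by omega : r ≠ 0), mul_zero, sub_zero]
      exact one_ne_zero
    have h := G_step r a hr ha k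
    calc phi r a (k + 1)
        = (1 - (r : ℚ) • PowerSeries.X ^ r)⁻¹ *
            (PowerSeries.X * PowerSeries.derivative ℚ (G r a k)) := by
          simp only [phi, ih]; ring
      _ = (1 - (r : ℚ) • PowerSeries.X ^ r)⁻¹ *
            ((1 - (r : ℚ) • PowerSeries.X ^ r) * G r a (k + 1)) := by rw [h]
      _ = G r a (k + 1) := by
          rw [← mul_assoc, PowerSeries.inv_mul_cancel _ hu, one_mul]


/-- For every `m ≥ -1` (written as `m = k - 1` with `k : ℕ`) and every `n ≥ 0`,
the coefficient of `z^n` in `φ_m` equals the finite sum over `j ≥ 0` with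
`j·r + a ≤ n` of `(a·(jr+a)^{j+m}/j!)` times the coefficient of
`z^{n-(jr+a)}` in `exp(−(jr+a)·z^r)`. -/
theorem statement0 (r a : ℕ) (hr : 1 ≤ r) (ha : 1 ≤ a) (k n : ℕ) :
    PowerSeries.coeff n (phi r a k) =
      ∑ j ∈ Finset.range (n + 1),
        if j * r + a ≤ n then
          (a : ℚ) * ((j * r + a : ℕ) : ℚ) ^ ((j : ℤ) + (k : ℤ) - 1) / (j.factorial : ℚ) *
            PowerSeries.coeff (n - (j * r + a)) (expPow (-((j * r + a : ℕ) : ℚ)) r)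
        else 0 := by
  rw [phi_eq r a hr ha k]
  simp only [G, PowerSeries.coeff_mk, Sfun, tval]
end

section
/- Let A be a commutative ℚ-algebra and R ∈ A⟦z⟧ a formal power series with zero constant term; set w := z·exp(−R) ∈ A⟦z⟧. Then for every integer a ≥ 1, the series z^a expands coefficientwise as z^a = Σ_{μ ≥ 1} (a/μ)·([z^{μ−a}] exp(μ·R))·w^μ; explicitly, for every n ≥ 0, the coefficient of z^n in z^a equals Σ_{μ=1}^{n} (a/μ)·([z^{μ−a}] exp(μ·R))·([z^n] w^μ), where [z^{μ−a}] exp(μ·R) is interpreted as 0 when μ < a. -/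
/-!
STATEMENT 1.  Exponential-form Lagrange inversion: if `R ∈ A⟦z⟧` has zero
constant term and `w = z·exp(−R)`, then for every `a ≥ 1`
`z^a = Σ_{μ ≥ 1} (a/μ)·([z^{μ−a}] exp(μR))·w^μ`, stated coefficientwise.
-/

open PowerSeries

/-- The formal exponential of a power series `F` over a commutative `ℚ`-algebra.
For `F` with zero constant term this is `exp F = Σ_k F^k/k!` (the coefficient of
`z^n` only receives contributions from `k ≤ n` since `F^k` has order `≥ k`). -/
noncomputable def pexp (A : Type*) [CommRing A] [Algebra ℚ A] (F : PowerSeries A) :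
    PowerSeries A :=
  PowerSeries.mk fun n =>
    ∑ k ∈ Finset.range (n + 1), ((k.factorial : ℚ))⁻¹ • PowerSeries.coeff (R := A) n (F ^ k)

set_option linter.unusedSectionVars false
set_option linter.unusedVariables false
set_option linter.unusedTactic false

namespace S1

variable {A : Type*} [CommRing A] [Algebra ℚ A]

/-- the operator `z d/dz` on power series. -/
noncomputable def theta (F : PowerSeries A) : PowerSeries A :=
  PowerSeries.mk fun n => n • PowerSeries.coeff (R := A) n F

@[simp] lemma coeff_theta (n : ℕ) (F : PowerSeries A) :
    coeff (R := A) n (theta F) = n • coeff (R := A) n F := coeff_mk _ _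

@[simp] lemma constantCoeff_theta (F : PowerSeries A) :
    constantCoeff (R := A) (theta F) = 0 := by
  have := coeff_theta (A := A) 0 F
  rwa [coeff_zero_eq_constantCoeff, zero_smul] at this

lemma theta_smul (c : ℚ) (F : PowerSeries A) : theta (c • F) = c • theta F := by
  ext n
  simp [smul_comm n c]

lemma theta_add (F G : PowerSeries A) : theta (F + G) = theta F + theta G := by
  ext n; simp

lemma theta_mul (F G : PowerSeries A) : theta (F * G) = theta F * G + F * theta G := by
  ext k
  rw [coeff_theta, map_add, coeff_mul, coeff_mul, coeff_mul, ← Finset.sum_add_distrib,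
    Finset.smul_sum]
  refine Finset.sum_congr rfl ?_
  rintro ⟨i, j⟩ hij
  rw [Finset.HasAntidiagonal.mem_antidiagonal] at hij
  subst hij
  rw [coeff_theta, coeff_theta, add_smul, smul_mul_assoc, mul_smul_comm]

lemma theta_pow (F : PowerSeries A) (m : ℕ) :
    theta (F ^ (m + 1)) = (m + 1) • (theta F * F ^ m) := by
  induction m with
  | zero => simp [theta_mul]
  | succ m ih =>
      rw [pow_succ, theta_mul, ih]
      simp only [succ_nsmul, smul_mul_assoc, add_mul, pow_succ]
      ring


lemma coeff_pow_eq_zero {F : PowerSeries A} (hF : constantCoeff (R := A) F = 0)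
    {n m : ℕ} (h : n < m) : coeff (R := A) n (F ^ m) = 0 := by
  obtain ⟨g, rfl⟩ := X_dvd_iff.2 hF
  rw [mul_pow, coeff_X_pow_mul', if_neg (by omega)]

lemma coeff_mul_pow_eq_zero {F : PowerSeries A} (hF : constantCoeff (R := A) F = 0)
    (G : PowerSeries A) {n m : ℕ} (h : n < m) : coeff (R := A) n (G * F ^ m) = 0 := by
  rw [coeff_mul]
  refine Finset.sum_eq_zero ?_
  rintro ⟨i, j⟩ hij
  rw [Finset.HasAntidiagonal.mem_antidiagonal] at hij
  rw [coeff_pow_eq_zero hF (by omega), mul_zero]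

lemma coeff_pexp (F : PowerSeries A) (n : ℕ) :
    coeff (R := A) n (pexp A F) =
      ∑ k ∈ Finset.range (n + 1), ((k.factorial : ℚ))⁻¹ • coeff (R := A) n (F ^ k) :=
  coeff_mk _ _

@[simp] lemma constantCoeff_pexp (F : PowerSeries A) :
    constantCoeff (R := A) (pexp A F) = 1 := by
  have h := coeff_pexp F 0
  rw [coeff_zero_eq_constantCoeff] at h
  simpa using h

lemma pexp_zero : pexp A (0 : PowerSeries A) = 1 := by
  ext n
  rw [coeff_pexp]
  rcases Nat.eq_zero_or_pos n with rfl | hn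
  · simp
  · rw [coeff_one, if_neg hn.ne']
    refine Finset.sum_eq_zero fun k _ => ?_
    rcases Nat.eq_zero_or_pos k with rfl | hk
    · simp [coeff_one, if_neg hn.ne']
    · rw [zero_pow hk.ne', map_zero, smul_zero]

lemma coeff_theta_mul_pow {F : PowerSeries A} (hF : constantCoeff (R := A) F = 0) (k : ℕ) :
    coeff (R := A) k (theta F * F ^ k) = 0 := by
  rw [coeff_mul]
  refine Finset.sum_eq_zero ?_
  rintro ⟨i, j⟩ hij
  rw [Finset.HasAntidiagonal.mem_antidiagonal] at hij
  rcases Nat.lt_or_ge j k with h | h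
  · rw [coeff_pow_eq_zero hF h, mul_zero]
  · have hi : i = 0 := by omega
    subst hi
    rw [coeff_theta, zero_smul, zero_mul]

/-- key computational lemma: `z d/dz (exp F) = (z dF/dz) · exp F`. -/
lemma theta_pexp {F : PowerSeries A} (hF : constantCoeff (R := A) F = 0) :
    theta (pexp A F) = theta F * pexp A F := by
  ext k
  -- both sides equal `∑ m ∈ range k, (m!)⁻¹ • coeff k (theta F * F ^ m)`
  have hL : coeff (R := A) k (theta (pexp A F)) =
      ∑ m ∈ Finset.range k, ((m.factorial : ℚ))⁻¹ • coeff (R := A) k (theta F * F ^ m) := by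
    rw [coeff_theta, coeff_pexp, Finset.smul_sum]
    have : ∀ m ∈ Finset.range (k+1),
        k • ((m.factorial : ℚ))⁻¹ • coeff (R := A) k (F ^ m)
          = ((m.factorial : ℚ))⁻¹ • coeff (R := A) k (theta (F ^ m)) := by
      intro m _
      rw [coeff_theta, smul_comm]
    rw [Finset.sum_congr rfl this, Finset.sum_range_succ']
    have h0 : ((Nat.factorial 0 : ℚ))⁻¹ • coeff (R := A) k (theta (F ^ 0)) = 0 := by
      rw [pow_zero]
      rcases Nat.eq_zero_or_pos k with rfl | hk
      · simp
      · rw [coeff_theta, coeff_one, if_neg hk.ne', smul_zero, smul_zero]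
    rw [h0, add_zero]
    refine Finset.sum_congr rfl fun i _ => ?_
    rw [theta_pow, map_nsmul, ← Nat.cast_smul_eq_nsmul ℚ, smul_smul]
    congr 1
    have hi : ((i:ℚ) + 1) ≠ 0 := by positivity
    rw [Nat.factorial_succ]
    push_cast
    field_simp
  have hR : coeff (R := A) k (theta F * pexp A F) =
      ∑ m ∈ Finset.range k, ((m.factorial : ℚ))⁻¹ • coeff (R := A) k (theta F * F ^ m) := by
    rw [coeff_mul]
    have step : ∀ p ∈ Finset.HasAntidiagonal.antidiagonal k,
        coeff (R := A) p.1 (theta F) * coeff (R := A) p.2 (pexp A F)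
        = ∑ m ∈ Finset.range (k+1), ((m.factorial : ℚ))⁻¹ •
            (coeff (R := A) p.1 (theta F) * coeff (R := A) p.2 (F ^ m)) := by
      rintro ⟨i, j⟩ hij
      rw [Finset.HasAntidiagonal.mem_antidiagonal] at hij
      dsimp only
      rw [coeff_pexp, Finset.sum_subset (Finset.range_subset_range.2 (by omega : j + 1 ≤ k + 1))
        (fun m _ hm => by
          rw [Finset.mem_range, not_lt] at hm
          rw [coeff_pow_eq_zero hF (by omega), smul_zero]),
        Finset.mul_sum]
      exact Finset.sum_congr rfl fun m _ => mul_smul_comm _ _ _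
    rw [Finset.sum_congr rfl step, Finset.sum_comm, Finset.sum_range_succ]
    have hz : ∑ p ∈ Finset.HasAntidiagonal.antidiagonal k, ((k.factorial : ℚ))⁻¹ •
        (coeff (R := A) p.1 (theta F) * coeff (R := A) p.2 (F ^ k)) = 0 := by
      rw [← Finset.smul_sum, ← coeff_mul, coeff_theta_mul_pow hF, smul_zero]
    rw [hz, add_zero]
    refine Finset.sum_congr rfl fun m _ => ?_
    rw [← Finset.smul_sum, ← coeff_mul]
  rw [hL, hR]

lemma ode_unique {S H K : PowerSeries A} (hS : constantCoeff (R := A) S = 0)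
    (h0 : constantCoeff (R := A) H = constantCoeff (R := A) K)
    (hH : theta H = S * H) (hK : theta K = S * K) : H = K := by
  ext n
  induction n using Nat.strong_induction_on with
  | _ n ih =>
    rcases Nat.eq_zero_or_pos n with rfl | hn
    · simpa [coeff_zero_eq_constantCoeff] using h0
    · have e1 : n • coeff (R := A) n H = ∑ p ∈ Finset.HasAntidiagonal.antidiagonal n,
          coeff (R := A) p.1 S * coeff (R := A) p.2 H := by rw [← coeff_theta, hH, coeff_mul]
      have e2 : n • coeff (R := A) n K = ∑ p ∈ Finset.HasAntidiagonal.antidiagonal n,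
          coeff (R := A) p.1 S * coeff (R := A) p.2 K := by rw [← coeff_theta, hK, coeff_mul]
      have key : (n : ℚ) • (coeff (R := A) n H - coeff (R := A) n K) = 0 := by
        rw [Nat.cast_smul_eq_nsmul, smul_sub, e1, e2, ← Finset.sum_sub_distrib]
        refine Finset.sum_eq_zero ?_
        rintro ⟨i, j⟩ hij
        rw [Finset.HasAntidiagonal.mem_antidiagonal] at hij
        rcases Nat.lt_or_ge j n with h | h
        · rw [ih j h, sub_self]
        · have hi : i = 0 := by omega
          subst hi
          rw [coeff_zero_eq_constantCoeff, hS, zero_mul, zero_mul, sub_self]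
      have hnq : (n : ℚ) ≠ 0 := by positivity
      rcases smul_eq_zero.mp key with h | h
      · exact absurd h hnq
      · exact sub_eq_zero.mp h

lemma pexp_add {F G : PowerSeries A} (hF : constantCoeff (R := A) F = 0)
    (hG : constantCoeff (R := A) G = 0) : pexp A (F + G) = pexp A F * pexp A G := by
  refine ode_unique (S := theta F + theta G) ?_ ?_ ?_ ?_
  · simp
  · simp
  · rw [← theta_add, theta_pexp (by simp [hF, hG])]
  · rw [theta_mul, theta_pexp hF, theta_pexp hG]; ring

lemma pexp_pow {F : PowerSeries A} (hF : constantCoeff (R := A) F = 0) (m : ℕ) :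
    (pexp A F) ^ m = pexp A ((m : ℚ) • F) := by
  induction m with
  | zero => rw [pow_zero, Nat.cast_zero, zero_smul, pexp_zero]
  | succ m ih =>
      rw [pow_succ, ih, ← pexp_add (by simp [hF]) hF]
      push_cast
      rw [add_smul, one_smul]

lemma coeff_mul_range (k : ℕ) (P Q : PowerSeries A) :
    coeff (R := A) k (P * Q) = ∑ j ∈ Finset.range (k + 1), coeff (R := A) j P * coeff (R := A) (k - j) Q := by
  rw [coeff_mul, Finset.Nat.sum_antidiagonal_eq_sum_range_succ_mk]

lemma smul_cancel {k : ℕ} (hk : 1 ≤ k) {x y : A} (h : (k : ℚ) • x = (k : ℚ) • y) :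
    x = y := by
  have hnq : (k : ℚ) ≠ 0 := by positivity
  calc x = (k:ℚ)⁻¹ • ((k:ℚ) • x) := (inv_smul_smul₀ hnq x).symm
  _ = (k:ℚ)⁻¹ • ((k:ℚ) • y) := by rw [h]
  _ = y := inv_smul_smul₀ hnq y

/-- the key coefficient identity: `[z^k] e^{kR} = [z^k] (θR · e^{kR})` for `k ≥ 1`. -/
lemma key_identity {R : PowerSeries A} (hR : constantCoeff (R := A) R = 0) {k : ℕ} (hk : 1 ≤ k) :
    coeff (R := A) k (pexp A ((k : ℚ) • R)) = coeff (R := A) k (theta R * pexp A ((k : ℚ) • R)) := by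
  have h := congrArg (coeff (R := A) k) (theta_pexp (F := (k : ℚ) • R) (by simp [hR]))
  rw [coeff_theta, theta_smul, smul_mul_assoc, coeff_smul, ← Nat.cast_smul_eq_nsmul ℚ] at h
  exact smul_cancel hk h

lemma coeff_w_pow {R : PowerSeries A} (hR : constantCoeff (R := A) R = 0) (μ m : ℕ) (hμm : μ ≤ m) :
    coeff (R := A) m ((X * pexp A (-R)) ^ μ) = coeff (R := A) (m - μ) (pexp A ((-(μ:ℚ)) • R)) := by
  have hs : (μ:ℚ) • (-R) = (-(μ:ℚ)) • R := by rw [smul_neg, ← neg_smul]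
  rw [mul_pow, coeff_X_pow_mul', if_pos hμm, pexp_pow (by simp [hR]) μ, hs]

lemma inner_eq {R : PowerSeries A} (hR : constantCoeff (R := A) R = 0) {n μ : ℕ}
    (hμ1 : 1 ≤ μ) (hμn : μ ≤ n) :
    ∑ m ∈ Finset.Icc μ n, (m:ℚ) • (coeff (R := A) m ((X * pexp A (-R)) ^ μ) *
        coeff (R := A) (n - m) (pexp A ((n:ℚ) • R)))
      = if μ = n then (n:ℚ) • (1:A) else 0 := by
  set k := n - μ with hk
  have hsum : ∑ m ∈ Finset.Icc μ n, (m:ℚ) • (coeff (R := A) m ((X * pexp A (-R)) ^ μ) *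
        coeff (R := A) (n - m) (pexp A ((n:ℚ) • R)))
      = ∑ j ∈ Finset.range (k+1), ((μ:ℚ) + (j:ℚ)) •
          (coeff (R := A) j (pexp A ((-(μ:ℚ)) • R)) * coeff (R := A) (k - j) (pexp A ((n:ℚ) • R))) := by
    rw [← Finset.Ico_add_one_right_eq_Icc, Finset.sum_Ico_eq_sum_range]
    have hb : n + 1 - μ = k + 1 := by omega
    rw [hb]
    refine Finset.sum_congr rfl fun j hj => ?_
    rw [Finset.mem_range] at hj
    rw [coeff_w_pow hR μ (μ+j) (by omega)]
    have h1 : μ + j - μ = j := by omega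
    have h2 : n - (μ + j) = k - j := by omega
    rw [h1, h2]
    push_cast
    ring_nf
  rw [hsum]
  have hsplit : ∀ j ∈ Finset.range (k+1), ((μ:ℚ) + (j:ℚ)) •
          (coeff (R := A) j (pexp A ((-(μ:ℚ)) • R)) * coeff (R := A) (k - j) (pexp A ((n:ℚ) • R)))
      = (μ:ℚ) • (coeff (R := A) j (pexp A ((-(μ:ℚ)) • R)) * coeff (R := A) (k - j) (pexp A ((n:ℚ) • R)))
        + coeff (R := A) j (theta (pexp A ((-(μ:ℚ)) • R))) * coeff (R := A) (k - j) (pexp A ((n:ℚ) • R)) := by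
    intro j _
    rw [add_smul, coeff_theta, ← Nat.cast_smul_eq_nsmul ℚ, smul_mul_assoc]
  rw [Finset.sum_congr rfl hsplit, Finset.sum_add_distrib, ← Finset.smul_sum,
    ← coeff_mul_range, ← coeff_mul_range]
  -- first piece: product of exponentials
  have hEE : pexp A ((-(μ:ℚ)) • R) * pexp A ((n:ℚ) • R) = pexp A ((k:ℚ) • R) := by
    rw [← pexp_add (by simp [hR]) (by simp [hR]), ← add_smul]
    congr 2
    rw [hk]
    push_cast [hμn]
    ring_nf
  -- second piece: theta of exponential
  have hTh : theta (pexp A ((-(μ:ℚ)) • R)) * pexp A ((n:ℚ) • R)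
      = (-(μ:ℚ)) • (theta R * pexp A ((k:ℚ) • R)) := by
    rw [theta_pexp (by simp [hR]), theta_smul, smul_mul_assoc, smul_mul_assoc, mul_assoc, hEE]
  rw [hEE, hTh, coeff_smul, neg_smul, ← smul_neg, ← smul_add]
  rcases eq_or_lt_of_le hμn with rfl | hlt
  · have hk0 : k = 0 := by omega
    rw [if_pos rfl, hk0]
    have hE0 : pexp A (((0:ℕ):ℚ) • R) = 1 := by
      rw [Nat.cast_zero, zero_smul, pexp_zero]
    rw [hE0, mul_one]
    simp
  · rw [if_neg (by omega)]
    have hk1 : 1 ≤ k := by omega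
    rw [← key_identity hR hk1]
    simp

lemma scal (q m : ℚ) (x y e : A) : m • (q • (x * y) * e) = q • (x * (m • (y * e))) := by
  simp only [smul_mul_assoc, mul_smul_comm, smul_smul, mul_assoc]
  rw [mul_comm m q]

end S1

/-- For every `n ≥ 0`, the coefficient of `z^n` in `z^a` equals
`Σ_{μ=1}^{n} (a/μ)·([z^{μ−a}] exp(μ·R))·([z^n] (z·exp(−R))^μ)`, where
`[z^{μ−a}] exp(μ·R)` is interpreted as `0` when `μ < a`. -/
theorem statement1 (A : Type*) [CommRing A] [Algebra ℚ A] (R : PowerSeries A)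
    (hR : PowerSeries.constantCoeff (R := A) R = 0) (a : ℕ) (ha : 1 ≤ a) (n : ℕ) :
    PowerSeries.coeff (R := A) n (PowerSeries.X ^ a) =
      ∑ μ ∈ Finset.Icc 1 n,
        ((a : ℚ) / (μ : ℚ)) •
          ((if a ≤ μ then PowerSeries.coeff (R := A) (μ - a) (pexp A ((μ : ℚ) • R)) else 0) *
            PowerSeries.coeff (R := A) n ((PowerSeries.X * pexp A (-R)) ^ μ)) := by
  induction n using Nat.strong_induction_on with
  | _ n ih =>
  rcases Nat.eq_zero_or_pos n with rfl | hn
  · rw [coeff_X_pow, if_neg (by omega), Finset.Icc_eq_empty (by omega), Finset.sum_empty]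
  -- notation
  set S : ℕ → A := fun m => ∑ μ ∈ Finset.Icc 1 m,
      ((a : ℚ) / (μ : ℚ)) •
        ((if a ≤ μ then PowerSeries.coeff (R := A) (μ - a) (pexp A ((μ : ℚ) • R)) else 0) *
          PowerSeries.coeff (R := A) m ((PowerSeries.X * pexp A (-R)) ^ μ)) with hS
  show coeff (R := A) n (X ^ a) = S n
  have qa : ∑ m ∈ Finset.Icc 1 n, (m:ℚ) • (coeff (R := A) m (X ^ a) *
        coeff (R := A) (n - m) (pexp A ((n:ℚ) • R)))
      = (if a ≤ n then (a:ℚ) • coeff (R := A) (n - a) (pexp A ((n:ℚ) • R)) else 0) := by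
    have step : ∀ m ∈ Finset.Icc 1 n, (m:ℚ) • (coeff (R := A) m (X ^ a) *
          coeff (R := A) (n - m) (pexp A ((n:ℚ) • R)))
        = if m = a then (a:ℚ) • coeff (R := A) (n - a) (pexp A ((n:ℚ) • R)) else 0 := by
      intro m hm
      rw [coeff_X_pow]
      split_ifs with h
      · subst h; rw [one_mul]
      · rw [zero_mul, smul_zero]
    rw [Finset.sum_congr rfl step, Finset.sum_ite_eq' (Finset.Icc 1 n) a]
    by_cases h : a ≤ n
    · rw [if_pos (Finset.mem_Icc.2 ⟨ha, h⟩), if_pos h]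
    · rw [if_neg (fun hc => h (Finset.mem_Icc.1 hc).2), if_neg h]
  have qb : ∑ m ∈ Finset.Icc 1 n, (m:ℚ) • (S m *
        coeff (R := A) (n - m) (pexp A ((n:ℚ) • R)))
      = (if a ≤ n then (a:ℚ) • coeff (R := A) (n - a) (pexp A ((n:ℚ) • R)) else 0) := by
    have expand : ∀ m ∈ Finset.Icc 1 n, (m:ℚ) • (S m *
          coeff (R := A) (n - m) (pexp A ((n:ℚ) • R)))
        = ∑ μ ∈ Finset.Icc 1 m, ((a : ℚ) / (μ : ℚ)) •
            ((if a ≤ μ then coeff (R := A) (μ - a) (pexp A ((μ : ℚ) • R)) else 0) *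
              ((m:ℚ) • (coeff (R := A) m ((X * pexp A (-R)) ^ μ) *
                coeff (R := A) (n - m) (pexp A ((n:ℚ) • R))))) := by
      intro m _
      rw [hS, Finset.sum_mul, Finset.smul_sum]
      exact Finset.sum_congr rfl fun μ _ => S1.scal _ _ _ _ _
    rw [Finset.sum_congr rfl expand]
    rw [Finset.sum_comm' (t' := Finset.Icc 1 n) (s' := fun μ => Finset.Icc μ n)
      (by intro m μ; simp only [Finset.mem_Icc]; omega)]
    have inner : ∀ μ ∈ Finset.Icc 1 n,
        ∑ m ∈ Finset.Icc μ n, ((a : ℚ) / (μ : ℚ)) •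
            ((if a ≤ μ then coeff (R := A) (μ - a) (pexp A ((μ : ℚ) • R)) else 0) *
              ((m:ℚ) • (coeff (R := A) m ((X * pexp A (-R)) ^ μ) *
                coeff (R := A) (n - m) (pexp A ((n:ℚ) • R)))))
        = if μ = n then ((a : ℚ) / (μ : ℚ)) •
            ((if a ≤ μ then coeff (R := A) (μ - a) (pexp A ((μ : ℚ) • R)) else 0) *
              ((n:ℚ) • (1:A))) else 0 := by
      intro μ hμ
      rw [Finset.mem_Icc] at hμ
      rw [← Finset.smul_sum, ← Finset.mul_sum, S1.inner_eq hR hμ.1 hμ.2]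
      by_cases h : μ = n
      · rw [if_pos h, if_pos h]
      · rw [if_neg h, if_neg h, mul_zero, smul_zero]
    rw [Finset.sum_congr rfl inner, Finset.sum_ite_eq' (Finset.Icc 1 n) n,
      if_pos (Finset.mem_Icc.2 ⟨hn, le_refl n⟩)]
    rw [mul_smul_comm, mul_one, smul_smul, div_mul_cancel₀]
    · split_ifs with h
      · rfl
      · rw [smul_zero]
    · positivity
  -- combine: split off the top term m = n
  have split : ∀ T : ℕ → A, ∑ m ∈ Finset.Icc 1 n, T m = (∑ m ∈ Finset.Ico 1 n, T m) + T n := by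
    intro T
    rw [← Finset.Ico_add_one_right_eq_Icc, Finset.sum_Ico_succ_top (by omega)]
  have qc := qa.trans qb.symm
  rw [split, split] at qc
  have hlow : ∑ m ∈ Finset.Ico 1 n, (m:ℚ) • (coeff (R := A) m (X ^ a) *
        coeff (R := A) (n - m) (pexp A ((n:ℚ) • R)))
      = ∑ m ∈ Finset.Ico 1 n, (m:ℚ) • (S m *
        coeff (R := A) (n - m) (pexp A ((n:ℚ) • R))) := by
    refine Finset.sum_congr rfl fun m hm => ?_
    rw [Finset.mem_Ico] at hm
    rw [ih m hm.2]
  rw [hlow] at qc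
  have qd := add_left_cancel qc
  rw [Nat.sub_self, coeff_zero_eq_constantCoeff, S1.constantCoeff_pexp, mul_one, mul_one] at qd
  exact S1.smul_cancel hn qd
end

section
/- Let d ≥ 2, r ≥ 1, k ≥ 1 be integers, A a commutative ℚ-algebra, t, p_1, …, p_{d−1} ∈ A, and p_d ∈ A a unit. Then for every integer m ≥ 1, the coefficient of u^m in the formal power series Σ_{n ≥ 0} binom(−k/r, n)·(Σ_{j=1}^{d−1} (t·p_j·p_d^{−1})·u^{d−j})^n ∈ A⟦u⟧ equals Σ_β (−1)^{ℓ(β)}·t^{ℓ(β)}·p_d^{−ℓ(β)}·[k/r]_{ℓ(β)}·(Π_{i=1}^{ℓ(β)} p_{d−β_i})/|Aut β|, where the sum runs over all partitions β of m whose parts are all at most d − 1. -/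
/-!
STATEMENT 3.  The coefficient identity (Ckmt) from the proof of Lemma 4.2: the
coefficient of `u^m` in `Σ_{n≥0} binom(−k/r, n)·(Σ_{j=1}^{d−1} t·p_j·p_d^{−1}·u^{d−j})^n`
equals `Σ_β (−1)^{ℓ(β)} t^{ℓ(β)} p_d^{−ℓ(β)} [k/r]_{ℓ(β)} (Π_i p_{d−β_i})/|Aut β|`,
the sum over partitions `β` of `m` with parts `≤ d − 1`.
-/

open PowerSeries

/-- Generalized binomial coefficient `binom(α, n) = (1/n!)·Π_{i=0}^{n−1}(α − i)` for `α ∈ ℚ`. -/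
noncomputable def qbinom (α : ℚ) (n : ℕ) : ℚ :=
  (∏ i ∈ Finset.range n, (α - (i : ℚ))) / (n.factorial : ℚ)

/-- Rising factorial `[x]_ℓ = x(x+1)⋯(x+ℓ−1)`. -/
noncomputable def risingFac (x : ℚ) (l : ℕ) : ℚ :=
  ∏ i ∈ Finset.range l, (x + (i : ℚ))

/-- `|Aut β| = Π_{v} m_v(β)!` for a partition given as a multiset of parts. -/
def autCard (β : Multiset ℕ) : ℕ :=
  ∏ v ∈ β.toFinset, (β.count v).factorial


lemma monomial_mul_monomial' (A : Type*) [CommSemiring A] (a b : ℕ) (x y : A) :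
    PowerSeries.monomial (R := A) a x * PowerSeries.monomial (R := A) b y
      = PowerSeries.monomial (R := A) (a + b) (x * y) := by
  have := MvPowerSeries.monomial_mul_monomial (R := A) (σ := Unit)
    (Finsupp.single () a) (Finsupp.single () b) x y
  rw [← Finsupp.single_add] at this
  exact this

lemma prod_map_monomial (A : Type*) [CommSemiring A] (s : Multiset ℕ) (e : ℕ → ℕ) (c : ℕ → A) :
    (s.map fun j => (PowerSeries.monomial (R := A) (e j) (c j))).prod
      = PowerSeries.monomial (R := A) ((s.map e).sum) ((s.map c).prod) := by
  induction s using Multiset.induction with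
  | empty =>
      simp only [Multiset.map_zero, Multiset.prod_zero, Multiset.sum_zero]
      rw [PowerSeries.monomial_zero_eq_C_apply, map_one]
  | cons a s ih =>
      simp only [Multiset.map_cons, Multiset.prod_cons, Multiset.sum_cons, ih,
        monomial_mul_monomial']

lemma autCard_map (s : Multiset ℕ) (f : ℕ → ℕ) (hf : Set.InjOn f {x | x ∈ s}) :
    autCard (s.map f) = autCard s := by
  unfold autCard
  rw [Multiset.toFinset_map, Finset.prod_image (by
    intro a ha b hb hab
    exact hf (by simpa using ha) (by simpa using hb) hab)]
  refine Finset.prod_congr rfl fun a ha => ?_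
  congr 1
  rw [Multiset.count_map, Multiset.count_eq_card_filter_eq]
  apply congrArg
  apply Multiset.filter_congr
  intro x hx
  constructor
  · intro h; exact hf (by simpa using ha) hx h
  · intro h; rw [h]

lemma autCard_mul_multinomial (s : Multiset ℕ) :
    autCard s * s.countPerms = (Multiset.card s).factorial := by
  have h : s.countPerms = Nat.multinomial s.toFinset s.count := by
    rw [Multiset.countPerms, Finsupp.multinomial_eq]
    congr 1
  rw [h]
  have := Nat.multinomial_spec s.toFinset s.count
  rwa [Multiset.toFinset_sum_count_eq] at this

lemma autCard_ne_zero (s : Multiset ℕ) : autCard s ≠ 0 := by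
  unfold autCard
  exact Finset.prod_ne_zero_iff.2 fun v _ => Nat.factorial_ne_zero _

lemma scalar_eq (x : ℚ) (s : Multiset ℕ) :
    qbinom (-x) (Multiset.card s) * (s.countPerms : ℚ)
      = (-1 : ℚ) ^ (Multiset.card s) * (risingFac x (Multiset.card s) / (autCard s : ℚ)) := by
  set n := Multiset.card s
  have h1 : ∏ i ∈ Finset.range n, (-x - (i : ℚ)) = (-1 : ℚ) ^ n * risingFac x n := by
    calc ∏ i ∈ Finset.range n, (-x - (i : ℚ))
        = ∏ i ∈ Finset.range n, ((-1 : ℚ) * (x + i)) :=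
          Finset.prod_congr rfl fun i _ => by ring
      _ = (-1 : ℚ) ^ n * risingFac x n := by
          rw [Finset.prod_mul_distrib, Finset.prod_const, Finset.card_range, risingFac]
  have h2 : (autCard s : ℚ) * (s.countPerms : ℚ) = (n.factorial : ℚ) := by
    exact_mod_cast congrArg (Nat.cast : ℕ → ℚ) (autCard_mul_multinomial s)
  have ha : (autCard s : ℚ) ≠ 0 := Nat.cast_ne_zero.2 (autCard_ne_zero s)
  have hf : (n.factorial : ℚ) ≠ 0 := Nat.cast_ne_zero.2 (Nat.factorial_ne_zero n)
  rw [qbinom, h1]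
  field_simp
  linear_combination (risingFac x n) * h2

theorem statement3 (A : Type*) [CommRing A] [Algebra ℚ A] (d r k : ℕ)
    (hd : 2 ≤ d) (hr : 1 ≤ r) (hk : 1 ≤ k) (t : A) (p : ℕ → A) (pdInv : A)
    (hpd : p d * pdInv = 1) (m : ℕ) (hm : 1 ≤ m) :
    ∑ n ∈ Finset.range (m + 1),
        qbinom (-(k : ℚ) / (r : ℚ)) n •
          PowerSeries.coeff (R := A) m
            ((∑ j ∈ Finset.Icc 1 (d - 1),
                PowerSeries.monomial (R := A) (d - j) (t * p j * pdInv)) ^ n) =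
      ∑ β ∈ Finset.univ.filter (fun β : Nat.Partition m => ∀ x ∈ β.parts, x ≤ d - 1),
        (risingFac ((k : ℚ) / (r : ℚ)) (Multiset.card β.parts) / (autCard β.parts : ℚ)) •
          ((-1 : A) ^ Multiset.card β.parts * t ^ Multiset.card β.parts *
            pdInv ^ Multiset.card β.parts * (β.parts.map fun i => p (d - i)).prod) := by
  classical
  -- Step 1 : expand LHS
  have lhs_eq : ∀ n : ℕ,
      PowerSeries.coeff (R := A) m
          ((∑ j ∈ Finset.Icc 1 (d - 1),
              PowerSeries.monomial (R := A) (d - j) (t * p j * pdInv)) ^ n)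
        = ∑ σ ∈ ((Finset.Icc 1 (d - 1)).sym n).filter
              (fun σ => m = (σ.1.map (fun j => d - j)).sum),
            ((σ.1.countPerms : A) * (σ.1.map (fun j => t * p j * pdInv)).prod) := by
    intro n
    rw [Finset.sum_pow, map_sum, Finset.sum_filter]
    refine Finset.sum_congr rfl fun σ _ => ?_
    rw [prod_map_monomial, ← nsmul_eq_mul, map_nsmul, PowerSeries.coeff_monomial,
      nsmul_eq_mul, mul_ite, mul_zero]
  simp only [lhs_eq, Finset.smul_sum]
  -- Step 2 : fiber the RHS by the number of parts
  have hmaps : ∀ β ∈ Finset.univ.filter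
      (fun β : Nat.Partition m => ∀ x ∈ β.parts, x ≤ d - 1),
      Multiset.card β.parts ∈ Finset.range (m + 1) := by
    intro β _
    rw [Finset.mem_range, Nat.lt_succ_iff]
    calc Multiset.card β.parts ≤ β.parts.sum := by
          simpa using Multiset.card_nsmul_le_sum (fun x hx => β.parts_pos hx)
      _ = m := β.parts_sum
  rw [← Finset.sum_fiberwise_of_maps_to hmaps]
  refine Finset.sum_congr rfl fun n _ => ?_
  -- Step 3 : bijection between the two inner sums
  refine Finset.sum_bij' (i := fun σ hσ => ?_) (j := fun β hβ => ?_) ?_ ?_ ?_ ?_ ?_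
  · -- the partition attached to σ
    have h := Finset.mem_filter.1 hσ
    refine ⟨σ.1.map (fun j => d - j), ?_, ?_⟩
    · intro x hx
      obtain ⟨j, hj, rfl⟩ := Multiset.mem_map.1 hx
      have := Finset.mem_Icc.1 ((Finset.mem_sym_iff.1 h.1) j hj)
      omega
    · exact h.2.symm
  · -- the sym element attached to β
    have h := Finset.mem_filter.1 hβ
    exact ⟨β.parts.map (fun i => d - i), by rw [Multiset.card_map]; exact h.2⟩
  · -- i maps into the target
    intro σ hσ
    have h := Finset.mem_filter.1 hσ
    simp only [Finset.mem_filter, Finset.mem_univ, true_and, Multiset.card_map]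
    constructor
    · intro x hx
      obtain ⟨j, hj, rfl⟩ := Multiset.mem_map.1 hx
      have := Finset.mem_Icc.1 ((Finset.mem_sym_iff.1 h.1) j hj)
      omega
    · exact σ.2
  · -- j maps into the source
    intro β hβ
    have h := Finset.mem_filter.1 hβ
    have hparts := (Finset.mem_filter.1 h.1).2
    refine Finset.mem_filter.2 ?_
    constructor
    · refine Finset.mem_sym_iff.2 ?_
      intro a ha
      obtain ⟨i, hi, rfl⟩ := Multiset.mem_map.1 ha
      have h1 : 1 ≤ i := β.parts_pos hi
      have h2 : i ≤ d - 1 := hparts i hi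
      rw [Finset.mem_Icc]
      omega
    · rw [Multiset.map_map]
      have : β.parts.map ((fun j => d - j) ∘ fun i => d - i) = β.parts.map id := by
        apply Multiset.map_congr rfl
        intro x hx
        have h1 : 1 ≤ x := β.parts_pos hx
        have h2 : x ≤ d - 1 := hparts x hx
        simp only [Function.comp_apply, id_eq]
        omega
      rw [this, Multiset.map_id, β.parts_sum]
  · -- left inverse
    intro σ hσ
    have h := Finset.mem_filter.1 hσ
    apply Subtype.ext
    simp only [Multiset.map_map]
    have : σ.1.map ((fun i => d - i) ∘ fun j => d - j) = σ.1.map id := by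
      apply Multiset.map_congr rfl
      intro x hx
      have := Finset.mem_Icc.1 ((Finset.mem_sym_iff.1 h.1) x hx)
      simp only [Function.comp_apply, id_eq]
      omega
    rw [this, Multiset.map_id]
  · -- right inverse
    intro β hβ
    have h := Finset.mem_filter.1 hβ
    have hparts := (Finset.mem_filter.1 h.1).2
    apply Nat.Partition.ext
    simp only [Multiset.map_map]
    have : β.parts.map ((fun j => d - j) ∘ fun i => d - i) = β.parts.map id := by
      apply Multiset.map_congr rfl
      intro x hx
      have h1 : 1 ≤ x := β.parts_pos hx
      have h2 : x ≤ d - 1 := hparts x hx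
      simp only [Function.comp_apply, id_eq]
      omega
    rw [this, Multiset.map_id]
  · -- term equality
    intro σ hσ
    have h := Finset.mem_filter.1 hσ
    have hmem : ∀ j ∈ σ.1, 1 ≤ j ∧ j ≤ d - 1 := by
      intro j hj
      have := Finset.mem_Icc.1 ((Finset.mem_sym_iff.1 h.1) j hj)
      exact this
    have hcard : Multiset.card σ.1 = n := σ.2
    have hcardmap : Multiset.card (σ.1.map (fun j => d - j)) = n := by
      rw [Multiset.card_map]; exact hcard
    -- the product of p's
    have hprodp : ((σ.1.map (fun j => d - j)).map (fun i => p (d - i))).prod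
        = (σ.1.map p).prod := by
      rw [Multiset.map_map]
      apply congrArg
      apply Multiset.map_congr rfl
      intro x hx
      have := hmem x hx
      simp only [Function.comp_apply]
      congr 1
      omega
    have hprodc : (σ.1.map (fun j => t * p j * pdInv)).prod
        = t ^ n * pdInv ^ n * (σ.1.map p).prod := by
      have e0 : σ.1.map (fun j => t * p j * pdInv) = σ.1.map (fun j => t * (p j * pdInv)) :=
        Multiset.map_congr rfl (fun x _ => by ring)
      rw [e0]
      have e1 : (σ.1.map (fun j => t * (p j * pdInv))).prod
          = (σ.1.map (fun _ => t)).prod * ((σ.1.map p).prod * (σ.1.map (fun _ => pdInv)).prod) := by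
        rw [← Multiset.prod_map_mul, ← Multiset.prod_map_mul]
      rw [e1, Multiset.map_const', Multiset.prod_replicate, Multiset.map_const',
        Multiset.prod_replicate, hcard]
      ring
    -- autCard compatibility
    have haut : autCard (σ.1.map (fun j => d - j)) = autCard σ.1 := by
      apply autCard_map
      intro a ha b hb hab
      have h1 := hmem a ha
      have h2 := hmem b hb
      have hab' : d - a = d - b := hab
      omega
    -- now compute
    rw [hprodp, hprodc, hcardmap, haut]
    -- move everything into ℚ-scalars
    have hmult : ((σ.1.countPerms : A) : A) * (t ^ n * pdInv ^ n * (σ.1.map p).prod)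
        = ((σ.1.countPerms : ℚ)) • (t ^ n * pdInv ^ n * (σ.1.map p).prod) := by
      rw [Algebra.smul_def, map_natCast]
    have hneg : ((-1 : A) ^ n * t ^ n * pdInv ^ n * (σ.1.map p).prod)
        = (((-1 : ℚ) ^ n)) • (t ^ n * pdInv ^ n * (σ.1.map p).prod) := by
      rw [Algebra.smul_def, map_pow, map_neg, map_one]
      ring
    rw [hmult, hneg, smul_smul, smul_smul]
    congr 1
    have := scalar_eq ((k : ℚ) / (r : ℚ)) σ.1
    rw [hcard] at this
    rw [neg_div, this]
    ring
end

section
/- Let R be a commutative ring, n ≥ 1 an integer, and x_1, …, x_n ∈ R. Let M be the n×n matrix whose (i, j) entry, for 1 ≤ i, j ≤ n, is the elementary symmetric polynomial e_{i−1} evaluated at the n − 1 elements x_1, …, x_n with x_j omitted (with the convention e_0 = 1). Then det M = Π_{1 ≤ j < l ≤ n} (x_j − x_l). -/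
/-!
STATEMENT 4.  The determinant of the `n×n` matrix whose `(i,j)` entry is the
elementary symmetric polynomial `e_{i−1}` of the variables `x_1,…,x_n` with
`x_j` omitted equals the Vandermonde product `Π_{j<l} (x_j − x_l)`.
(Rows and columns are indexed by `Fin n`, so the `(i,j)` entry is `e_i` of the
`x`'s with `x_j` omitted, `e_0 = 1`.)
-/

open Finset Matrix

/-- Splitting the elementary symmetric polynomial of `insert j s` according to
whether the subset contains `j`. -/
lemma esymm_aux_insert {α : Type*} [DecidableEq α] {R : Type*} [CommRing R]
    (x : α → R) {j : α} {s : Finset α} (h : j ∉ s) (m : ℕ) :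
    ∑ t ∈ (insert j s).powersetCard (m + 1), ∏ l ∈ t, x l =
      (∑ t ∈ s.powersetCard (m + 1), ∏ l ∈ t, x l) +
        x j * ∑ t ∈ s.powersetCard m, ∏ l ∈ t, x l := by
  rw [Finset.powersetCard_succ_insert h]
  rw [Finset.sum_union]
  · congr 1
    rw [Finset.sum_image]
    · rw [Finset.mul_sum]
      refine Finset.sum_congr rfl fun t ht => ?_
      rw [Finset.mem_powersetCard] at ht
      rw [Finset.prod_insert (fun hj => h (ht.1 hj))]
    · intro t ht u hu htu
      rw [Finset.mem_coe, Finset.mem_powersetCard] at ht hu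
      have hjt : j ∉ t := fun hj => h (ht.1 hj)
      have hju : j ∉ u := fun hj => h (hu.1 hj)
      rw [← Finset.erase_insert hjt, ← Finset.erase_insert hju, htu]
  · rw [Finset.disjoint_left]
    intro t ht ht'
    rw [Finset.mem_powersetCard] at ht
    rw [Finset.mem_image] at ht'
    obtain ⟨u, _, rfl⟩ := ht'
    exact h (ht.1 (Finset.mem_insert_self j u))

/-- Expansion of `e_i` of the variables with `x j` omitted in terms of the full
elementary symmetric polynomials and powers of `x j`. -/
lemma esymm_erase_expand {n : ℕ} {R : Type*} [CommRing R] (x : Fin n → R)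
    (j : Fin n) (i : ℕ) :
    ∑ t ∈ (Finset.univ.erase j).powersetCard i, ∏ l ∈ t, x l =
      ∑ k ∈ Finset.range (i + 1),
        (-1 : R) ^ k * x j ^ k * ∑ t ∈ (Finset.univ : Finset (Fin n)).powersetCard (i - k), ∏ l ∈ t, x l := by
  set F : ℕ → R := fun m => ∑ t ∈ (Finset.univ : Finset (Fin n)).powersetCard m, ∏ l ∈ t, x l with hF
  induction i with
  | zero => simp [hF]
  | succ i ih =>
    have hins : insert j (Finset.univ.erase j) = (Finset.univ : Finset (Fin n)) := by
      rw [Finset.insert_erase (Finset.mem_univ j)]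
    have key := esymm_aux_insert x (Finset.notMem_erase j Finset.univ) i
    rw [hins] at key
    have h1 : ∑ t ∈ (Finset.univ.erase j).powersetCard (i + 1), ∏ l ∈ t, x l =
        F (i + 1) - x j * ∑ t ∈ (Finset.univ.erase j).powersetCard i, ∏ l ∈ t, x l := by
      rw [hF]; dsimp only; rw [key]; ring
    rw [h1, ih, Finset.sum_range_succ' (fun k => (-1 : R) ^ k * x j ^ k * F (i + 1 - k))]
    simp only [pow_zero, one_mul, Nat.sub_zero]
    have h2 : ∑ k ∈ Finset.range (i + 1), (-1 : R) ^ (k + 1) * x j ^ (k + 1) * F (i + 1 - (k + 1)) =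
        -(x j * ∑ k ∈ Finset.range (i + 1), (-1 : R) ^ k * x j ^ k * F (i - k)) := by
      rw [Finset.mul_sum, ← Finset.sum_neg_distrib]
      refine Finset.sum_congr rfl fun k _ => ?_
      have h3 : i + 1 - (k + 1) = i - k := by omega
      rw [h3]; ring
    rw [h2]; ring

theorem statement4 (R : Type*) [CommRing R] (n : ℕ) (hn : 1 ≤ n) (x : Fin n → R) :
    Matrix.det
        (Matrix.of fun i j : Fin n =>
          ∑ t ∈ (Finset.univ.erase j).powersetCard (i : ℕ), ∏ l ∈ t, x l) =
      ∏ j : Fin n, ∏ l ∈ Finset.Ioi j, (x j - x l) := by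
  classical
  set E : ℕ → R := fun m => ∑ t ∈ (Finset.univ : Finset (Fin n)).powersetCard m, ∏ l ∈ t, x l with hE
  set L : Matrix (Fin n) (Fin n) R :=
    Matrix.of fun i k : Fin n => if (k : ℕ) ≤ (i : ℕ) then (-1 : R) ^ (k : ℕ) * E ((i : ℕ) - (k : ℕ)) else 0
    with hL
  have hfact : (Matrix.of fun i j : Fin n =>
      ∑ t ∈ (Finset.univ.erase j).powersetCard (i : ℕ), ∏ l ∈ t, x l) =
      L * (Matrix.vandermonde x)ᵀ := by
    ext i j
    simp only [Matrix.mul_apply, Matrix.of_apply, Matrix.transpose_apply, Matrix.vandermonde, hL]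
    rw [esymm_erase_expand x j (i : ℕ)]
    rw [Fin.sum_univ_eq_sum_range (fun k =>
      (if k ≤ (i : ℕ) then (-1 : R) ^ k * E ((i : ℕ) - k) else 0) * x j ^ k) n]
    rw [← Finset.sum_subset (Finset.range_subset_range.mpr (by omega : (i : ℕ) + 1 ≤ n))]
    · refine Finset.sum_congr rfl fun k hk => ?_
      rw [Finset.mem_range] at hk
      rw [if_pos (by omega)]
      ring
    · intro k _ hk
      rw [Finset.mem_range, not_lt] at hk
      rw [if_neg (by omega), zero_mul]
  rw [hfact, Matrix.det_mul, Matrix.det_transpose, Matrix.det_vandermonde]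
  have hLdet : L.det = ∏ i : Fin n, (-1 : R) ^ (i : ℕ) := by
    rw [Matrix.det_of_lowerTriangular L]
    · refine Finset.prod_congr rfl fun i _ => ?_
      simp only [hL, Matrix.of_apply, if_pos le_rfl, Nat.sub_self]
      have : E 0 = 1 := by simp [hE]
      rw [this, mul_one]
    · intro i k hik
      simp only [OrderDual.toDual_lt_toDual] at hik
      simp only [hL, Matrix.of_apply]
      rw [if_neg (by exact_mod_cast not_le.mpr hik)]
  rw [hLdet]
  have hsign : ∏ i : Fin n, (-1 : R) ^ (i : ℕ) = (-1 : R) ^ ∑ i : Fin n, (i : ℕ) :=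
    Finset.prod_pow_eq_pow_sum _ _ _
  -- rewrite the RHS, pulling out signs
  have hRHS : ∏ j : Fin n, ∏ l ∈ Finset.Ioi j, (x j - x l) =
      (-1 : R) ^ (∑ j : Fin n, (Finset.Ioi j).card) *
        ∏ j : Fin n, ∏ l ∈ Finset.Ioi j, (x l - x j) := by
    rw [← Finset.prod_pow_eq_pow_sum, ← Finset.prod_mul_distrib]
    refine Finset.prod_congr rfl fun j _ => ?_
    rw [← Finset.prod_const, ← Finset.prod_mul_distrib]
    refine Finset.prod_congr rfl fun l _ => by ring
  rw [hRHS, hsign]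
  congr 2
  calc ∑ i : Fin n, (i : ℕ) = ∑ i ∈ Finset.range n, i := Fin.sum_univ_eq_sum_range (fun i => i) n
    _ = ∑ i ∈ Finset.range n, (n - 1 - i) := (Finset.sum_range_reflect (fun i => i) n).symm
    _ = ∑ j : Fin n, (n - 1 - (j : ℕ)) := (Fin.sum_univ_eq_sum_range _ n).symm
    _ = ∑ j : Fin n, (Finset.Ioi j).card := by simp [Fin.card_Ioi]
end

section
/- Let s ≥ 2 be an integer and ν a nonempty partition (finite multiset of positive integers) that is bounded in the sense that the sum of any two of its parts taken at distinct positions is at least s (i.e. whenever a sub-multiset {x, y} of size two is contained in ν, one has x + y ≥ s). Suppose ν is the multiset sum ν = ρ^{(1)} + ⋯ + ρ^{(k)} of nonempty partitions ρ^{(1)}, …, ρ^{(k)} each of total size |ρ^{(c)}| ≤ s − 1. Then each ρ^{(c)} consists of exactly one part, and k = ℓ(ν). -/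
/-!
STATEMENT 5.  If `ν` is a nonempty partition (a multiset of positive integers)
which is bounded, i.e. any two of its parts taken at distinct positions sum to
at least `s`, and if `ν` decomposes as the multiset sum of nonempty partitions
`ρ^{(1)}, …, ρ^{(k)}` each of total size `≤ s − 1`, then each `ρ^{(c)}` is a
singleton and `k = ℓ(ν)`.
-/

theorem statement5 (s : ℕ) (hs : 2 ≤ s) (ν : Multiset ℕ)
    (hpos : ∀ x ∈ ν, 0 < x) (hne : ν ≠ 0)
    (hbdd : ∀ x y : ℕ, ({x, y} : Multiset ℕ) ≤ ν → s ≤ x + y)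
    (k : ℕ) (ρ : Fin k → Multiset ℕ)
    (hρne : ∀ c, ρ c ≠ 0) (hρpos : ∀ c, ∀ x ∈ ρ c, 0 < x)
    (hρsize : ∀ c, (ρ c).sum ≤ s - 1)
    (hsum : ν = ∑ c, ρ c) :
    (∀ c, Multiset.card (ρ c) = 1) ∧ k = Multiset.card ν := by
  have hcard : ∀ c, Multiset.card (ρ c) = 1 := by
    intro c
    have h1 : 0 < Multiset.card (ρ c) := Multiset.card_pos.mpr (hρne c)
    by_contra h
    have h2 : 2 ≤ Multiset.card (ρ c) := by omega
    obtain ⟨x, hx⟩ := Multiset.exists_mem_of_ne_zero (hρne c)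
    have herase : (ρ c).erase x ≠ 0 := by
      intro h0
      have hce := Multiset.cons_erase hx
      rw [h0] at hce
      have : Multiset.card (ρ c) = 1 := by rw [← hce]; simp
      omega
    obtain ⟨y, hy⟩ := Multiset.exists_mem_of_ne_zero herase
    have hpair : ({x, y} : Multiset ℕ) ≤ ρ c := by
      have h3 : (x ::ₘ {y} : Multiset ℕ) ≤ x ::ₘ (ρ c).erase x :=
        Multiset.cons_le_cons x (Multiset.singleton_le.mpr hy)
      rwa [Multiset.cons_erase hx] at h3
    have hle : ρ c ≤ ν := by
      rw [hsum]
      exact Finset.single_le_sum (f := ρ) (fun i _ => zero_le)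
        (Finset.mem_univ c)
    have hsge : s ≤ x + y := hbdd x y (hpair.trans hle)
    have hsumge : x + y ≤ (ρ c).sum := by
      obtain ⟨t, ht⟩ := Multiset.le_iff_exists_add.mp hpair
      rw [ht]
      simp
    have := hρsize c
    omega
  refine ⟨hcard, ?_⟩
  have hcs : ∀ t : Finset (Fin k),
      Multiset.card (∑ c ∈ t, ρ c) = ∑ c ∈ t, Multiset.card (ρ c) := by
    intro t
    induction t using Finset.induction with
    | empty => simp
    | insert _ _ h ih => simp [Finset.sum_insert h, ih]
  rw [hsum, hcs Finset.univ]
  simp [hcard]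
end

section
/- There exists a unique Z ∈ R with Z − z ∈ t·R such that Z = z·exp( σ·p_d·(Q(Z)^d − Q(z)^d) + t·σ·P̃(Q(Z)) ). Moreover, this Z satisfies Z − z ∈ K⟦z^{−1}⟧⟦t⟧, i.e. for every l ≥ 0 the coefficient of t^l in Z − z is a formal power series in z^{−1} (has no positive powers of z). -/
/-!
STATEMENT 7.  Exponentiated form of the characterization (lncarac) of the proof
of Lemma 4.2: with `L = K((z⁻¹))` the field of formal Laurent series in `z⁻¹`
and `R = L⟦t⟧`, there is a unique `Z ∈ R` with `Z − z ∈ t·R` such that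
`Z = z·exp(σ·p_d·(Q(Z)^d − Q(z)^d) + t·σ·P̃(Q(Z)))`; moreover every coefficient
of `t^l` in `Z − z` lies in `K⟦z⁻¹⟧ ⊆ L`.

We realize `L` as `LaurentSeries K` with variable `z⁻¹` (so `z` is the Hahn
series supported at `−1`, and `K⟦z⁻¹⟧` is the range of
`HahnSeries.ofPowerSeries ℤ K`), and `R` as `PowerSeries L` with variable `t`.
For `h ∈ t·R`, `exp h = Σ_n h^n/n!` is computed coefficientwise (the `n ≤ m`
truncation computes the coefficient of `t^m` since `h^n ∈ t^n·R`).
-/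

open PowerSeries

/-- The formal exponential on `L⟦t⟧`, intended for arguments in `t·L⟦t⟧`. -/
noncomputable def pexpL (L : Type*) [Field L] (F : PowerSeries L) : PowerSeries L :=
  PowerSeries.mk fun n =>
    ∑ k ∈ Finset.range (n + 1), ((k.factorial : L))⁻¹ * PowerSeries.coeff n (F ^ k)

/-- The element `z = (z⁻¹)⁻¹` of `L = K((z⁻¹))`. -/
noncomputable def zElem (K : Type*) [Field K] : LaurentSeries K :=
  HahnSeries.single (-1 : ℤ) (1 : K)

/-- The canonical map `K → R = L⟦t⟧`. -/
noncomputable def cK (K : Type*) [Field K] : K →+* PowerSeries (LaurentSeries K) :=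
  (PowerSeries.C : LaurentSeries K →+* PowerSeries (LaurentSeries K)).comp HahnSeries.C

namespace St7
open Finset
section
variable {L : Type*} [Field L]
local notation "R" => PowerSeries L

theorem dvd_mul_lift {N : ℕ} {T U : R} (hT : (X:R)^N ∣ T) (hU : (X:R) ∣ U) :
    (X:R)^(N+1) ∣ T * U := by
  rw [pow_succ]; exact mul_dvd_mul hT hU

theorem X_dvd_iff' {f : R} : (X:R) ∣ f ↔ constantCoeff f = 0 := PowerSeries.X_dvd_iff

theorem pow_sub_pow (U V : R) (k : ℕ) :
    U ^ k - V ^ k = (∑ i ∈ range k, U ^ i * V ^ (k - 1 - i)) * (U - V) :=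
  (geom_sum₂_mul U V k).symm

theorem cc_geom {U V : R} {c : L} (hU : constantCoeff U = c) (hV : constantCoeff V = c)
    (k : ℕ) : constantCoeff (∑ i ∈ range k, U ^ i * V ^ (k - 1 - i)) = k * c ^ (k-1) := by
  rw [map_sum]
  have : ∀ i ∈ range k, constantCoeff (U ^ i * V ^ (k-1-i)) = c ^ (k-1) := by
    intro i hi
    rw [map_mul, map_pow, map_pow, hU, hV, ← pow_add]
    congr 1
    have := mem_range.mp hi
    omega
  rw [Finset.sum_congr rfl this, Finset.sum_const, card_range, nsmul_eq_mul]

/-- linearization of powers -/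
theorem lin_pow {N : ℕ} {U V : R} {c : L} (hU : constantCoeff U = c)
    (hV : constantCoeff V = c) (hd : (X:R)^N ∣ U - V) (k : ℕ) :
    (X:R)^(N+1) ∣ (U ^ k - V ^ k) - C ((k : L) * c ^ (k-1)) * (U - V) := by
  rw [pow_sub_pow]
  have : (∑ i ∈ range k, U ^ i * V ^ (k - 1 - i)) * (U - V)
      - C ((k : L) * c ^ (k-1)) * (U - V)
      = (U - V) * ((∑ i ∈ range k, U ^ i * V ^ (k - 1 - i)) - C ((k : L) * c ^ (k-1))) := by
    ring
  rw [this]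
  apply dvd_mul_lift hd
  rw [X_dvd_iff', map_sub, cc_geom hU hV, constantCoeff_C]
  ring

/-- Taylor expansion of powers to second order. -/
theorem taylor_pow (U h : R) (k : ℕ) :
    ∃ c : R, (U + h) ^ k = U ^ k + (k : R) * U ^ (k-1) * h + h^2 * c := by
  cases k with
  | zero => exact ⟨0, by simp⟩
  | succ k =>
    induction k with
    | zero => exact ⟨0, by simp [pow_one]⟩
    | succ k ih =>
      obtain ⟨c, hc⟩ := ih
      refine ⟨U * c + ((k:R)+1) * U ^ k + h * c, ?_⟩
      have h1 : (U + h) ^ (k+1+1) = (U + h) * (U + h)^(k+1) := by ring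
      rw [h1, hc]
      simp only [Nat.add_sub_cancel, Nat.cast_add, Nat.cast_one]
      ring

theorem coeff_pow_eq_zero {F : R} (hF : constantCoeff F = 0) {k n : ℕ} (h : n < k) :
    coeff n (F ^ k) = 0 := by
  have : (X:R)^k ∣ F ^ k := pow_dvd_pow_of_dvd (X_dvd_iff'.mpr hF) k
  exact X_pow_dvd_iff.mp this n h

theorem coeff_pexpL (F : R) (n : ℕ) :
    coeff n (pexpL L F) = ∑ k ∈ range (n+1), ((k.factorial : L))⁻¹ * coeff n (F ^ k) :=
  coeff_mk n _

theorem constantCoeff_pexpL (F : R) : constantCoeff (pexpL L F) = 1 := by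
  have := coeff_pexpL F 0
  rw [← coeff_zero_eq_constantCoeff_apply, this]
  simp

/-- exp difference lemma -/
theorem pexpL_sub {N : ℕ} (hN : 1 ≤ N) {A B : R} (hA : constantCoeff A = 0)
    (hB : constantCoeff B = 0) (hd : (X:R)^N ∣ A - B) :
    (X:R)^(N+1) ∣ (pexpL L A - pexpL L B) - (A - B) := by
  rw [X_pow_dvd_iff]
  intro m hm
  have hAB0 : coeff 0 (A - B) = 0 := X_pow_dvd_iff.mp hd 0 hN
  have key : ∀ k, k ≠ 1 → ((k.factorial : L))⁻¹ * coeff m (A ^ k - B ^ k) = 0 := by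
    intro k hk
    rcases Nat.eq_zero_or_pos k with rfl | hk1
    · simp
    have hk2 : 2 ≤ k := by omega
    have : (X:R)^(N+1) ∣ A ^ k - B ^ k := by
      rw [pow_sub_pow]
      have hgam : (X:R) ∣ ∑ i ∈ range k, A ^ i * B ^ (k - 1 - i) := by
        rw [X_dvd_iff', map_sum]
        apply Finset.sum_eq_zero
        intro i hi
        rw [map_mul, map_pow, map_pow, hA, hB]
        rcases Nat.eq_zero_or_pos i with rfl | hi1
        · rw [pow_zero, one_mul, zero_pow (by omega)]
        · rw [zero_pow (by omega), zero_mul]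
      rw [mul_comm]
      exact dvd_mul_lift hd hgam
    rw [X_pow_dvd_iff.mp this m hm, mul_zero]
  have hsum : coeff m (pexpL L A - pexpL L B) = coeff m (A - B) := by
    rw [map_sub, coeff_pexpL, coeff_pexpL, ← Finset.sum_sub_distrib]
    have : ∀ k ∈ range (m+1), ((k.factorial : L))⁻¹ * coeff m (A ^ k)
        - ((k.factorial : L))⁻¹ * coeff m (B ^ k)
        = ((k.factorial : L))⁻¹ * coeff m (A ^ k - B ^ k) := by
      intro k _; rw [map_sub]; ring
    rw [Finset.sum_congr rfl this]
    rw [Finset.sum_eq_single 1]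
    · simp [map_sub]
    · intro k _ hk; exact key k hk
    · intro h1
      have : m = 0 := by
        by_contra hm0
        exact h1 (mem_range.mpr (by omega))
      subst this
      simp [pow_one, hAB0]
  rw [map_sub, hsum, sub_self]

end
section

variable {K : Type*} [Field K]

local notation "LS" => LaurentSeries K
local notation "RS" => PowerSeries (LaurentSeries K)

/-- generic polynomial-sum difference divisibility -/
theorem dvd_pow_sub' {N : ℕ} {U V : RS} (hd : (X:RS)^N ∣ U - V) (k : ℕ) :
    (X:RS)^N ∣ U ^ k - V ^ k := by
  rw [pow_sub_pow]; exact Dvd.dvd.mul_left hd _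

theorem dvd_polysum_sub {N : ℕ} (c : ℕ → K) (T : Finset ℕ) {U V : RS}
    (hd : (X:RS)^N ∣ U - V) :
    (X:RS)^N ∣ (∑ j ∈ T, cK K (c j) * U ^ j) - (∑ j ∈ T, cK K (c j) * V ^ j) := by
  rw [← Finset.sum_sub_distrib]
  apply Finset.dvd_sum
  intro j _
  rw [← mul_sub]
  exact Dvd.dvd.mul_left (dvd_pow_sub' hd j) _

variable (s d : ℕ) (q p : ℕ → K) (σ pd : K)

noncomputable def zS : RS := PowerSeries.C (zElem K)
noncomputable def Qr (Y : RS) : RS := ∑ i ∈ Icc 1 s, cK K (q i) * Y ^ i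
noncomputable def DQr (Y : RS) : RS := ∑ i ∈ Icc 1 s, cK K (q i) * ((i : RS) * Y ^ (i-1))
noncomputable def Ptr (Y : RS) : RS := ∑ j ∈ Icc 1 (d-1), cK K (p j) * Y ^ j
noncomputable def Fr (Z : RS) : RS :=
  cK K σ * cK K pd * (Qr s q Z ^ d - Qr s q (zS (K := K)) ^ d) + X * cK K σ * Ptr d p (Qr s q Z)
noncomputable def qaE : LS := ∑ i ∈ Icc 1 s, HahnSeries.C (q i) * zElem K ^ i
noncomputable def dqE : LS := ∑ i ∈ Icc 1 s, HahnSeries.C (q i) * ((i : LS) * zElem K ^ (i-1))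
noncomputable def mE : LS := HahnSeries.C σ * HahnSeries.C pd * ((d : LS) * qaE s q ^ (d-1) * dqE s q)
noncomputable def mmE : LS := zElem K * mE s d q σ pd
noncomputable def uE : LS := (1 - mmE s d q σ pd)⁻¹
noncomputable def PsiS (Z : RS) : RS := zS (K := K) * pexpL _ (Fr s d q p σ pd Z)
noncomputable def PhiS (Z : RS) : RS :=
  Z - PowerSeries.C (uE s d q σ pd) * (Z - PsiS s d q p σ pd Z)

theorem cK_eq (x : K) : cK K x = PowerSeries.C (HahnSeries.C x) := rfl

theorem cc_cK (x : K) : constantCoeff (cK K x) = HahnSeries.C x := constantCoeff_C _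

theorem cc_zS : constantCoeff (zS (K := K)) = zElem K := constantCoeff_C _

theorem cc_Qr {Y : RS} (hY : constantCoeff Y = zElem K) :
    constantCoeff (Qr s q Y) = qaE s q := by
  rw [Qr, qaE, map_sum]
  refine Finset.sum_congr rfl fun i _ => ?_
  rw [map_mul, map_pow, hY, cc_cK]

theorem cc_DQr {Y : RS} (hY : constantCoeff Y = zElem K) :
    constantCoeff (DQr s q Y) = dqE s q := by
  rw [DQr, dqE, map_sum]
  refine Finset.sum_congr rfl fun i _ => ?_
  rw [map_mul, map_mul, map_pow, hY, cc_cK, map_natCast]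

theorem cc_Fr {Z : RS} (hZ : constantCoeff Z = zElem K) :
    constantCoeff (Fr s d q p σ pd Z) = 0 := by
  rw [Fr, map_add, map_mul, map_mul, map_sub, map_pow, map_pow, cc_Qr s q hZ,
    cc_Qr s q (cc_zS (K := K)), map_mul, map_mul, constantCoeff_X]
  ring

theorem cc_PsiS {Z : RS} (hZ : constantCoeff Z = zElem K) :
    constantCoeff (PsiS s d q p σ pd Z) = zElem K := by
  rw [PsiS, map_mul, cc_zS]
  -- constant coeff of pexpL is 1
  have : constantCoeff (pexpL _ (Fr s d q p σ pd Z)) = 1 := by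
    rw [← coeff_zero_eq_constantCoeff_apply, pexpL, coeff_mk]
    simp
  rw [this, mul_one]

theorem cc_PhiS {Z : RS} (hZ : constantCoeff Z = zElem K) :
    constantCoeff (PhiS s d q p σ pd Z) = zElem K := by
  rw [PhiS, map_sub, map_mul, map_sub, hZ, cc_PsiS s d q p σ pd hZ, sub_self, mul_zero,
    sub_zero]

/-- linearization of Qr -/
theorem lin_Qr {N : ℕ} {Z Z' : RS} (hZ : constantCoeff Z = zElem K)
    (hZ' : constantCoeff Z' = zElem K) (hdd : (X:RS)^N ∣ Z - Z') :
    (X:RS)^(N+1) ∣ (Qr s q Z - Qr s q Z') - PowerSeries.C (dqE s q) * (Z - Z') := by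
  have key : ∀ i : ℕ,
      (X:RS)^(N+1) ∣ (Z^i - Z'^i) - PowerSeries.C ((i : LS) * zElem K ^ (i-1)) * (Z - Z') :=
    fun i => lin_pow hZ hZ' hdd i
  have heq : (Qr s q Z - Qr s q Z') - PowerSeries.C (dqE s q) * (Z - Z')
      = ∑ i ∈ Icc 1 s, cK K (q i) *
        ((Z^i - Z'^i) - PowerSeries.C ((i : LS) * zElem K ^ (i-1)) * (Z - Z')) := by
    rw [Qr, Qr, dqE, map_sum, ← Finset.sum_sub_distrib, Finset.sum_mul,
      ← Finset.sum_sub_distrib]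
    refine Finset.sum_congr rfl fun i _ => ?_
    have : (cK K (q i) : RS) * PowerSeries.C ((i : LS) * zElem K ^ (i-1))
        = PowerSeries.C (HahnSeries.C (q i) * ((i : LS) * zElem K ^ (i-1))) := by
      simp only [cK_eq, ← map_mul]
    rw [mul_sub, mul_sub, ← this]
    ring
  rw [heq]
  exact Finset.dvd_sum fun i _ => Dvd.dvd.mul_left (key i) _

theorem dvd_Qr_sub {N : ℕ} {Z Z' : RS} (hdd : (X:RS)^N ∣ Z - Z') :
    (X:RS)^N ∣ Qr s q Z - Qr s q Z' := dvd_polysum_sub q _ hdd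

/-- linearization of Fr -/
theorem lin_Fr {N : ℕ} {Z Z' : RS} (hZ : constantCoeff Z = zElem K)
    (hZ' : constantCoeff Z' = zElem K) (hdd : (X:RS)^N ∣ Z - Z') :
    (X:RS)^(N+1) ∣ (Fr s d q p σ pd Z - Fr s d q p σ pd Z')
      - PowerSeries.C (mE s d q σ pd) * (Z - Z') := by
  have h1 := lin_Qr s q hZ hZ' hdd
  have hQd : (X:RS)^N ∣ Qr s q Z - Qr s q Z' := dvd_Qr_sub s q hdd
  have h2 := lin_pow (cc_Qr s q hZ) (cc_Qr s q hZ') hQd d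
  have h3 : (X:RS)^(N+1) ∣ PowerSeries.C ((d : LS) * qaE s q ^ (d-1)) *
      ((Qr s q Z - Qr s q Z') - PowerSeries.C (dqE s q) * (Z - Z')) :=
    Dvd.dvd.mul_left h1 _
  have h5 : (X:RS)^N ∣ Ptr d p (Qr s q Z) - Ptr d p (Qr s q Z') := dvd_polysum_sub p _ hQd
  have h6 : (X:RS)^(N+1) ∣ X * cK K σ * (Ptr d p (Qr s q Z) - Ptr d p (Qr s q Z')) := by
    have : X * cK K σ * (Ptr d p (Qr s q Z) - Ptr d p (Qr s q Z'))
        = (cK K σ * (Ptr d p (Qr s q Z) - Ptr d p (Qr s q Z'))) * X := by ring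
    rw [this]
    exact dvd_mul_lift (Dvd.dvd.mul_left h5 _) dvd_rfl
  have heq : (Fr s d q p σ pd Z - Fr s d q p σ pd Z')
      - PowerSeries.C (mE s d q σ pd) * (Z - Z')
      = cK K σ * cK K pd * (((Qr s q Z ^ d - Qr s q Z' ^ d)
          - PowerSeries.C ((d : LS) * qaE s q ^ (d-1)) * (Qr s q Z - Qr s q Z'))
        + PowerSeries.C ((d : LS) * qaE s q ^ (d-1)) *
          ((Qr s q Z - Qr s q Z') - PowerSeries.C (dqE s q) * (Z - Z')))
      + X * cK K σ * (Ptr d p (Qr s q Z) - Ptr d p (Qr s q Z')) := by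
    rw [Fr, Fr, mE]
    have hc : (PowerSeries.C (HahnSeries.C σ * HahnSeries.C pd *
          ((d : LS) * qaE s q ^ (d-1) * dqE s q)) : RS)
        = cK K σ * cK K pd * (PowerSeries.C ((d : LS) * qaE s q ^ (d-1)) *
            PowerSeries.C (dqE s q)) := by
      rw [map_mul, map_mul, map_mul, cK_eq, cK_eq]
    rw [hc]
    ring
  rw [heq]
  exact dvd_add (Dvd.dvd.mul_left (dvd_add h2 h3) _) h6

theorem dvd_Fr_sub {N : ℕ} {Z Z' : RS} (hZ : constantCoeff Z = zElem K)
    (hZ' : constantCoeff Z' = zElem K) (hdd : (X:RS)^N ∣ Z - Z') :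
    (X:RS)^N ∣ Fr s d q p σ pd Z - Fr s d q p σ pd Z' := by
  have hF := lin_Fr s d q p σ pd hZ hZ' hdd
  have h2 : (X:RS)^N ∣ PowerSeries.C (mE s d q σ pd) * (Z - Z') :=
    Dvd.dvd.mul_left hdd _
  have := dvd_add (dvd_trans (pow_dvd_pow (X:RS) (Nat.le_succ N)) hF) h2
  rwa [sub_add_cancel] at this

theorem lin_PsiS {N : ℕ} (hN : 1 ≤ N) {Z Z' : RS} (hZ : constantCoeff Z = zElem K)
    (hZ' : constantCoeff Z' = zElem K) (hdd : (X:RS)^N ∣ Z - Z') :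
    (X:RS)^(N+1) ∣ (PsiS s d q p σ pd Z - PsiS s d q p σ pd Z')
      - PowerSeries.C (mmE s d q σ pd) * (Z - Z') := by
  have hF := lin_Fr s d q p σ pd hZ hZ' hdd
  have hFd := dvd_Fr_sub s d q p σ pd hZ hZ' hdd
  have hE := pexpL_sub hN (cc_Fr s d q p σ pd hZ) (cc_Fr s d q p σ pd hZ') hFd
  have heq : (PsiS s d q p σ pd Z - PsiS s d q p σ pd Z')
      - PowerSeries.C (mmE s d q σ pd) * (Z - Z')
      = zS (K := K) * ((pexpL _ (Fr s d q p σ pd Z) - pexpL _ (Fr s d q p σ pd Z'))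
          - (Fr s d q p σ pd Z - Fr s d q p σ pd Z'))
        + zS (K := K) * ((Fr s d q p σ pd Z - Fr s d q p σ pd Z')
          - PowerSeries.C (mE s d q σ pd) * (Z - Z')) := by
    rw [PsiS, PsiS, mmE, map_mul, zS]
    ring
  rw [heq]
  exact dvd_add (Dvd.dvd.mul_left hE _) (Dvd.dvd.mul_left hF _)

theorem PhiS_contract (hmm : 1 - mmE s d q σ pd ≠ 0) {N : ℕ} (hN : 1 ≤ N) {Z Z' : RS}
    (hZ : constantCoeff Z = zElem K) (hZ' : constantCoeff Z' = zElem K)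
    (hdd : (X:RS)^N ∣ Z - Z') :
    (X:RS)^(N+1) ∣ PhiS s d q p σ pd Z - PhiS s d q p σ pd Z' := by
  have hone : (PowerSeries.C (uE s d q σ pd) : RS)
      * (1 - PowerSeries.C (mmE s d q σ pd)) = 1 := by
    rw [← map_one ((PowerSeries.C : LS →+* RS)), ← map_sub, ← map_mul, uE,
      inv_mul_cancel₀ hmm, map_one]
  have key : PhiS s d q p σ pd Z - PhiS s d q p σ pd Z'
      = PowerSeries.C (uE s d q σ pd) * ((PsiS s d q p σ pd Z - PsiS s d q p σ pd Z')
          - PowerSeries.C (mmE s d q σ pd) * (Z - Z')) := by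
    rw [PhiS, PhiS]
    linear_combination (Z' - Z) * hone
  rw [key]
  exact Dvd.dvd.mul_left (lin_PsiS s d q p σ pd hN hZ hZ' hdd) _

noncomputable def seqZ : ℕ → RS
  | 0 => zS (K := K)
  | n+1 => PhiS s d q p σ pd (seqZ n)

theorem cc_seqZ : ∀ n, constantCoeff (seqZ s d q p σ pd n) = zElem K := by
  intro n
  induction n with
  | zero => exact cc_zS
  | succ n ih => exact cc_PhiS s d q p σ pd ih

theorem seq_step (hmm : 1 - mmE s d q σ pd ≠ 0) :
    ∀ n, (X:RS)^(n+1) ∣ seqZ s d q p σ pd (n+1) - seqZ s d q p σ pd n := by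
  intro n
  induction n with
  | zero =>
    rw [pow_one, X_dvd_iff', map_sub, cc_seqZ, cc_seqZ, sub_self]
  | succ n ih =>
    exact PhiS_contract s d q p σ pd hmm (Nat.succ_le_succ (Nat.zero_le n))
      (cc_seqZ s d q p σ pd (n+1)) (cc_seqZ s d q p σ pd n) ih

theorem seq_cross (hmm : 1 - mmE s d q σ pd ≠ 0) (n : ℕ) :
    ∀ k, (X:RS)^(n+1) ∣ seqZ s d q p σ pd (n+k) - seqZ s d q p σ pd n := by
  intro k
  induction k with
  | zero => simp
  | succ k ih =>
    have h1 : (X:RS)^(n+1) ∣ seqZ s d q p σ pd (n+k+1) - seqZ s d q p σ pd (n+k) :=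
      dvd_trans (pow_dvd_pow (X:RS) (by omega)) (seq_step s d q p σ pd hmm (n+k))
    have := dvd_add h1 ih
    rwa [sub_add_sub_cancel] at this

noncomputable def Zstar : RS := PowerSeries.mk fun n => coeff n (seqZ s d q p σ pd n)

theorem cc_Zstar : constantCoeff (Zstar s d q p σ pd) = zElem K := by
  rw [← coeff_zero_eq_constantCoeff_apply, Zstar, coeff_mk,
    coeff_zero_eq_constantCoeff_apply]
  exact cc_seqZ s d q p σ pd 0

theorem Zstar_close (hmm : 1 - mmE s d q σ pd ≠ 0) (n : ℕ) :
    (X:RS)^(n+1) ∣ Zstar s d q p σ pd - seqZ s d q p σ pd n := by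
  rw [X_pow_dvd_iff]
  intro m hm
  rw [map_sub, Zstar, coeff_mk]
  obtain ⟨k, rfl⟩ : ∃ k, n = m + k := ⟨n - m, by omega⟩
  have := seq_cross s d q p σ pd hmm m k
  have h0 := X_pow_dvd_iff.mp this m (Nat.lt_succ_self m)
  rw [map_sub, sub_eq_zero] at h0
  rw [h0, sub_self]

theorem Phi_fixed (hmm : 1 - mmE s d q σ pd ≠ 0) :
    PhiS s d q p σ pd (Zstar s d q p σ pd) = Zstar s d q p σ pd := by
  apply PowerSeries.ext
  intro n
  have h1 : (X:RS)^(n+2) ∣ PhiS s d q p σ pd (Zstar s d q p σ pd)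
      - seqZ s d q p σ pd (n+2) := by
    have := PhiS_contract s d q p σ pd hmm (N := n+2) (by omega)
      (cc_Zstar s d q p σ pd) (cc_seqZ s d q p σ pd (n+1))
      (Zstar_close s d q p σ pd hmm (n+1))
    have h2 : seqZ s d q p σ pd (n+2) = PhiS s d q p σ pd (seqZ s d q p σ pd (n+1)) := rfl
    rw [h2]
    exact dvd_trans (pow_dvd_pow (X:RS) (by omega)) this
  have h3 : (X:RS)^(n+2) ∣ Zstar s d q p σ pd - seqZ s d q p σ pd (n+1) :=
    Zstar_close s d q p σ pd hmm (n+1)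
  have h5 : (X:RS)^(n+2) ∣ seqZ s d q p σ pd (n+2) - seqZ s d q p σ pd (n+1) :=
    seq_step s d q p σ pd hmm (n+1)
  have h4 : (X:RS)^(n+2) ∣ PhiS s d q p σ pd (Zstar s d q p σ pd) - Zstar s d q p σ pd := by
    have heq : PhiS s d q p σ pd (Zstar s d q p σ pd) - Zstar s d q p σ pd
        = (PhiS s d q p σ pd (Zstar s d q p σ pd) - seqZ s d q p σ pd (n+2))
          + (seqZ s d q p σ pd (n+2) - seqZ s d q p σ pd (n+1))
          - (Zstar s d q p σ pd - seqZ s d q p σ pd (n+1)) := by ring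
    rw [heq]
    exact dvd_sub (dvd_add h1 h5) h3
  have := X_pow_dvd_iff.mp h4 n (by omega)
  rw [map_sub, sub_eq_zero] at this
  exact this

theorem Psi_fixed (hmm : 1 - mmE s d q σ pd ≠ 0) :
    Zstar s d q p σ pd = PsiS s d q p σ pd (Zstar s d q p σ pd) := by
  have h := Phi_fixed s d q p σ pd hmm
  rw [PhiS] at h
  have h2 : PowerSeries.C (uE s d q σ pd)
      * (Zstar s d q p σ pd - PsiS s d q p σ pd (Zstar s d q p σ pd)) = 0 := by
    linear_combination -h
  have hone : (PowerSeries.C (1 - mmE s d q σ pd) : RS)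
      * PowerSeries.C (uE s d q σ pd) = 1 := by
    rw [← map_mul, uE, mul_inv_cancel₀ hmm, map_one]
  have := congrArg (fun w => PowerSeries.C (1 - mmE s d q σ pd) * w) h2
  simp only [mul_zero, ← mul_assoc, hone, one_mul] at this
  rw [sub_eq_zero] at this
  exact this

theorem unique_fixed (hmm : 1 - mmE s d q σ pd ≠ 0) {Z Z' : RS}
    (h1 : constantCoeff Z = zElem K) (e1 : Z = PsiS s d q p σ pd Z)
    (h2 : constantCoeff Z' = zElem K) (e2 : Z' = PsiS s d q p σ pd Z') : Z = Z' := by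
  have fix1 : PhiS s d q p σ pd Z = Z := by
    rw [PhiS, ← e1, sub_self, mul_zero, sub_zero]
  have fix2 : PhiS s d q p σ pd Z' = Z' := by
    rw [PhiS, ← e2, sub_self, mul_zero, sub_zero]
  have key : ∀ N, (X:RS)^(N+1) ∣ Z - Z' := by
    intro N
    induction N with
    | zero => rw [pow_one, X_dvd_iff', map_sub, h1, h2, sub_self]
    | succ N ih =>
      have := PhiS_contract s d q p σ pd hmm (N := N+1) (by omega) h1 h2 ih
      rwa [fix1, fix2] at this
  apply PowerSeries.ext
  intro n
  have := X_pow_dvd_iff.mp (key n) n (by omega)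
  rw [map_sub, sub_eq_zero] at this
  exact this


def Sge (k : ℤ) (f : LS) : Prop := ∀ n : ℤ, n < k → f.coeff n = 0

theorem Sge.mono {k k' : ℤ} (h : k' ≤ k) {f : LS} (hf : Sge k f) : Sge k' f :=
  fun n hn => hf n (lt_of_lt_of_le hn h)

theorem Sge_zero (k : ℤ) : Sge k (0 : LS) := fun _ _ => rfl

theorem Sge.add {k : ℤ} {f g : LS} (hf : Sge k f) (hg : Sge k g) : Sge k (f + g) := by
  intro n hn
  rw [HahnSeries.coeff_add, hf n hn, hg n hn, add_zero]

theorem Sge.neg {k : ℤ} {f : LS} (hf : Sge k f) : Sge k (-f) := by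
  intro n hn
  rw [HahnSeries.coeff_neg, hf n hn, neg_zero]

theorem Sge.sub {k : ℤ} {f g : LS} (hf : Sge k f) (hg : Sge k g) : Sge k (f - g) := by
  rw [sub_eq_add_neg]; exact hf.add hg.neg

theorem Sge.sum {α : Type*} {k : ℤ} {T : Finset α} {f : α → LS} (hf : ∀ i ∈ T, Sge k (f i)) :
    Sge k (∑ i ∈ T, f i) := by
  classical
  induction T using Finset.induction with
  | empty => simpa using Sge_zero k
  | insert x T hx ih =>
    rw [Finset.sum_insert hx]
    exact (hf _ (Finset.mem_insert_self _ _)).add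
      (ih fun i hi => hf i (Finset.mem_insert_of_mem hi))

theorem Sge.mul {j j' : ℤ} {f g : LS} (hf : Sge j f) (hg : Sge j' g) :
    Sge (j + j') (f * g) := by
  intro n hn
  rw [HahnSeries.coeff_mul]
  apply Finset.sum_eq_zero
  intro ij hij
  rw [Finset.mem_addAntidiagonal] at hij
  obtain ⟨h1, h2, h3⟩ := hij
  by_cases hc : ij.1 < j
  · rw [hf ij.1 hc, zero_mul]
  · have : ij.2 < j' := by omega
    rw [hg ij.2 this, mul_zero]

theorem Sge_single (b : ℤ) (x : K) : Sge b (HahnSeries.single b x) := by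
  intro n hn
  rw [HahnSeries.coeff_single_of_ne (by omega)]

theorem Sge_C (x : K) : Sge 0 (HahnSeries.C x) := Sge_single 0 x

theorem Sge_one : Sge 0 (1 : LS) := by
  rw [← HahnSeries.single_zero_one]; exact Sge_single 0 1

theorem Sge.pow {j : ℤ} {f : LS} (hf : Sge j f) : ∀ n : ℕ, Sge ((n : ℤ) * j) (f ^ n) := by
  intro n
  induction n with
  | zero =>
    rw [pow_zero]
    exact Sge.mono (by simp) Sge_one
  | succ n ih =>
    rw [pow_succ]
    have := ih.mul hf
    have heq : ((n : ℤ) * j + j) = ((n + 1 : ℕ) : ℤ) * j := by push_cast; ring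
    rw [heq] at this
    exact this

theorem Sge_a : Sge (-1) (zElem K) := Sge_single _ _

theorem ainv_eq : (zElem K)⁻¹ = HahnSeries.single (1 : ℤ) (1 : K) := by
  refine (_root_.eq_inv_of_mul_eq_one_left ?_).symm
  rw [zElem, HahnSeries.single_mul_single]
  norm_num

theorem Sge_ainv : Sge 1 (zElem K)⁻¹ := by rw [ainv_eq]; exact Sge_single _ _

theorem Sge_natCast (i : ℕ) : Sge 0 ((i : LS)) := by
  rw [← map_natCast (HahnSeries.C : K →+* LS) i]; exact Sge_C _

theorem C_inv (x : K) : (HahnSeries.C x : LS)⁻¹ = HahnSeries.C x⁻¹ := (map_inv₀ _ _).symm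

theorem Sge_of_le_order {f : LS} {k : ℤ} (h : k ≤ f.order) : Sge k f := by
  intro n hn
  exact HahnSeries.coeff_eq_zero_of_lt_order (by omega)

theorem le_order_of_Sge {f : LS} {k : ℤ} (hf : f ≠ 0) (h : Sge k f) : k ≤ f.order := by
  by_contra hc
  exact HahnSeries.coeff_order_eq_zero.not.mpr hf (h _ (by omega))


def SgeS (k : ℤ) (U : RS) : Prop := ∀ n, Sge k (PowerSeries.coeff n U)

theorem SgeS.mono {k k' : ℤ} (h : k' ≤ k) {U : RS} (hU : SgeS k U) : SgeS k' U :=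
  fun n => (hU n).mono h

theorem SgeS.add {k : ℤ} {U V : RS} (hU : SgeS k U) (hV : SgeS k V) : SgeS k (U + V) := by
  intro n; rw [map_add]; exact (hU n).add (hV n)

theorem SgeS.sub {k : ℤ} {U V : RS} (hU : SgeS k U) (hV : SgeS k V) : SgeS k (U - V) := by
  intro n; rw [map_sub]; exact (hU n).sub (hV n)

theorem SgeS.sum {α : Type*} {k : ℤ} {T : Finset α} {f : α → RS}
    (hf : ∀ i ∈ T, SgeS k (f i)) : SgeS k (∑ i ∈ T, f i) := by
  intro n; rw [map_sum]; exact Sge.sum fun i hi => hf i hi n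

theorem SgeS.mul {j j' : ℤ} {U V : RS} (hU : SgeS j U) (hV : SgeS j' V) :
    SgeS (j + j') (U * V) := by
  intro n
  rw [coeff_mul]
  exact Sge.sum fun p _ => (hU p.1).mul (hV p.2)

theorem SgeS.pow {j : ℤ} {U : RS} (hU : SgeS j U) : ∀ n : ℕ, SgeS ((n : ℤ) * j) (U ^ n) := by
  intro n
  induction n with
  | zero =>
    rw [pow_zero]
    intro n
    rw [Nat.cast_zero, zero_mul]
    rcases Nat.eq_zero_or_pos n with rfl | hn
    · rw [coeff_zero_eq_constantCoeff_apply, map_one]; exact Sge_one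
    · rw [coeff_one, if_neg (by omega)]; exact Sge_zero 0
  | succ n ih =>
    rw [pow_succ]
    have := ih.mul hU
    have heq : ((n : ℤ) * j + j) = ((n + 1 : ℕ) : ℤ) * j := by push_cast; ring
    rw [heq] at this
    exact this

theorem SgeS_C {k : ℤ} {f : LS} (hf : Sge k f) : SgeS k (PowerSeries.C f) := by
  intro n
  rw [coeff_C]
  split
  · exact hf
  · exact Sge_zero k

theorem SgeS_cK (x : K) : SgeS 0 ((cK K x : RS)) := SgeS_C (Sge_C x)

theorem SgeS_X : SgeS 0 (X : RS) := by
  intro n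
  rw [coeff_X]
  split
  · exact Sge_one
  · exact Sge_zero 0

theorem SgeS_natCast (i : ℕ) : SgeS 0 ((i : RS)) := by
  rw [← map_natCast ((PowerSeries.C : LS →+* RS)) i]
  exact SgeS_C (Sge_natCast i)

theorem SgeS_zS : SgeS (-1) (zS (K := K)) := SgeS_C Sge_a

section OrderFacts
variable [CharZero K] (s d : ℕ) (q : ℕ → K) (σ pd : K)
variable (hs : 1 ≤ s) (hd : 2 ≤ d) (hσ : σ ≠ 0) (hpd : pd ≠ 0) (hqs : q s ≠ 0)

theorem hahn_sum_coeff {α : Type*} (T : Finset α) (f : α → LS) (n : ℤ) :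
    (∑ i ∈ T, f i).coeff n = ∑ i ∈ T, (f i).coeff n :=
  map_sum (HahnSeries.coeff.addMonoidHom n) f T

theorem zElem_pow (i : ℕ) : (zElem K) ^ i = HahnSeries.single (-(i:ℤ)) (1:K) := by
  rw [zElem, HahnSeries.single_pow, one_pow]
  congr 1
  simp [zsmul_eq_mul]

theorem qaE_term (i : ℕ) (x : K) :
    HahnSeries.C x * (zElem K) ^ i = HahnSeries.single (-(i:ℤ)) x := by
  rw [zElem_pow, HahnSeries.C_apply, HahnSeries.single_mul_single, zero_add, mul_one]

include hs hqs in
theorem qaE_coeff : (qaE s q).coeff (-(s:ℤ)) = q s := by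
  rw [qaE]
  rw [hahn_sum_coeff]
  rw [Finset.sum_eq_single s]
  · rw [qaE_term, HahnSeries.coeff_single_same]
  · intro i hi hne
    rw [qaE_term, HahnSeries.coeff_single_of_ne]
    intro hc
    exact hne (by omega)
  · intro hc
    exact absurd (Finset.mem_Icc.mpr ⟨hs, le_refl s⟩) hc

theorem Sge_qaE : Sge (-(s:ℤ)) (qaE s q) := by
  apply Sge.sum
  intro i hi
  rw [qaE_term]
  exact (Sge_single _ _).mono (by simp only [neg_le_neg_iff, Int.ofNat_le]; exact (Finset.mem_Icc.mp hi).2)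

include hs hqs in
theorem qaE_ne : qaE s q ≠ 0 := by
  intro hc
  apply hqs
  rw [← qaE_coeff s q hs hqs, hc, HahnSeries.coeff_zero]

include hs hqs in
theorem order_qaE : (qaE s q).order = -(s:ℤ) := by
  apply le_antisymm
  · exact HahnSeries.order_le_of_coeff_ne_zero (by rw [qaE_coeff s q hs hqs]; exact hqs)
  · exact le_order_of_Sge (qaE_ne s q hs hqs) (Sge_qaE s q)

theorem dqE_term (i : ℕ) (x : K) :
    HahnSeries.C x * ((i : LS) * (zElem K) ^ (i-1))
      = HahnSeries.single (-((i-1 : ℕ):ℤ)) (x * i) := by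
  rw [zElem_pow, ← map_natCast (HahnSeries.C : K →+* LS) i, HahnSeries.C_apply,
    HahnSeries.C_apply, HahnSeries.single_mul_single, HahnSeries.single_mul_single]
  simp

include hs hqs in
theorem dqE_coeff : (dqE s q).coeff (-((s-1 : ℕ):ℤ)) = q s * s := by
  rw [dqE, hahn_sum_coeff, Finset.sum_eq_single s]
  · rw [dqE_term, HahnSeries.coeff_single_same]
  · intro i hi hne
    rw [dqE_term, HahnSeries.coeff_single_of_ne]
    have his := (Finset.mem_Icc.mp hi)
    intro hc
    exact hne (by omega)
  · intro hc
    exact absurd (Finset.mem_Icc.mpr ⟨hs, le_refl s⟩) hc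

theorem Sge_dqE : Sge (-((s-1 : ℕ):ℤ)) (dqE s q) := by
  apply Sge.sum
  intro i hi
  rw [dqE_term]
  refine (Sge_single _ _).mono ?_
  have := (Finset.mem_Icc.mp hi).2
  simp only [neg_le_neg_iff, Int.ofNat_le]
  omega

include hs hqs in
theorem dqE_ne : dqE s q ≠ 0 := by
  intro hc
  have h1 : q s * s ≠ 0 := by
    apply mul_ne_zero hqs
    exact_mod_cast Nat.cast_ne_zero.mpr (by omega)
  apply h1
  rw [← dqE_coeff s q hs hqs, hc, HahnSeries.coeff_zero]

include hs hqs in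
theorem order_dqE : (dqE s q).order = -((s-1 : ℕ):ℤ) := by
  apply le_antisymm
  · apply HahnSeries.order_le_of_coeff_ne_zero
    rw [dqE_coeff s q hs hqs]
    exact mul_ne_zero hqs (Nat.cast_ne_zero.mpr (by omega))
  · exact le_order_of_Sge (dqE_ne s q hs hqs) (Sge_dqE s q)

include hd in
theorem dLS_ne : ((d : LS)) ≠ 0 := by
  rw [← map_natCast (HahnSeries.C : K →+* LS) d]
  simp only [ne_eq, _root_.map_eq_zero]
  exact Nat.cast_ne_zero.mpr (by omega)

theorem C_ne {x : K} (hx : x ≠ 0) : (HahnSeries.C x : LS) ≠ 0 := by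
  simpa using hx

include hs hd hσ hpd hqs in
theorem mE_ne : mE s d q σ pd ≠ 0 := by
  rw [mE]
  exact mul_ne_zero (mul_ne_zero (C_ne hσ) (C_ne hpd))
    (mul_ne_zero (mul_ne_zero (dLS_ne d hd) (pow_ne_zero _ (qaE_ne s q hs hqs)))
      (dqE_ne s q hs hqs))

theorem zElem_ne : (zElem K) ≠ 0 := HahnSeries.single_ne_zero one_ne_zero

include hs hd hσ hpd hqs in
theorem mmE_ne : mmE s d q σ pd ≠ 0 :=
  mul_ne_zero zElem_ne (mE_ne s d q σ pd hs hd hσ hpd hqs)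

include hs hd hσ hpd hqs in
theorem order_mmE : (mmE s d q σ pd).order = -((s*d : ℕ):ℤ) := by
  rw [mmE]
  rw [HahnSeries.order_mul zElem_ne (mE_ne s d q σ pd hs hd hσ hpd hqs)]
  rw [mE, HahnSeries.order_mul (mul_ne_zero (C_ne hσ) (C_ne hpd))
    (mul_ne_zero (mul_ne_zero (dLS_ne d hd) (pow_ne_zero _ (qaE_ne s q hs hqs)))
      (dqE_ne s q hs hqs))]
  rw [HahnSeries.order_mul (C_ne hσ) (C_ne hpd)]
  rw [HahnSeries.order_mul (mul_ne_zero (dLS_ne d hd) (pow_ne_zero _ (qaE_ne s q hs hqs)))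
    (dqE_ne s q hs hqs)]
  rw [HahnSeries.order_mul (dLS_ne d hd) (pow_ne_zero _ (qaE_ne s q hs hqs))]
  rw [HahnSeries.order_pow, order_qaE s q hs hqs, order_dqE s q hs hqs]
  rw [zElem, HahnSeries.order_single one_ne_zero]
  rw [← map_natCast (HahnSeries.C : K →+* LS) d, HahnSeries.order_C, HahnSeries.order_C,
    HahnSeries.order_C]
  have h1 : ((d-1 : ℕ):ℤ) = (d:ℤ) - 1 := by omega
  have h2 : ((s-1 : ℕ):ℤ) = (s:ℤ) - 1 := by omega
  have h3 : ((s*d : ℕ):ℤ) = (s:ℤ) * (d:ℤ) := by push_cast; ring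
  rw [nsmul_eq_mul, h1, h2, h3]
  ring

include hs hd hσ hpd hqs in
theorem hmm_ne : 1 - mmE s d q σ pd ≠ 0 := by
  intro hc
  have h1 : mmE s d q σ pd = 1 := by linear_combination -hc
  have h2 := order_mmE s d q σ pd hs hd hσ hpd hqs
  rw [h1, HahnSeries.order_one] at h2
  have : 2 ≤ s * d := by calc 2 = 1 * 2 := by omega
                              _ ≤ s * d := Nat.mul_le_mul hs hd
  omega

include hs hd hσ hpd hqs in
theorem Sge_uE : Sge ((s*d : ℕ):ℤ) (uE s d q σ pd) := by
  have hne := hmm_ne s d q σ pd hs hd hσ hpd hqs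
  have hune : uE s d q σ pd ≠ 0 := inv_ne_zero hne
  have hord : (1 - mmE s d q σ pd).order ≤ -((s*d : ℕ):ℤ) := by
    apply HahnSeries.order_le_of_coeff_ne_zero
    have h1 : (1 : LS).coeff (-((s*d : ℕ):ℤ)) = 0 := by
      rw [← HahnSeries.single_zero_one]
      rw [HahnSeries.coeff_single_of_ne]
      have : 2 ≤ s * d := by calc 2 = 1 * 2 := by omega
                                  _ ≤ s * d := Nat.mul_le_mul hs hd
      omega
    rw [HahnSeries.coeff_sub, h1, zero_sub, ne_eq, neg_eq_zero]
    rw [← order_mmE s d q σ pd hs hd hσ hpd hqs]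
    exact HahnSeries.coeff_order_eq_zero.not.mpr (mmE_ne s d q σ pd hs hd hσ hpd hqs)
  apply Sge_of_le_order
  have hmul : uE s d q σ pd * (1 - mmE s d q σ pd) = 1 := by
    rw [uE, inv_mul_cancel₀ hne]
  have := HahnSeries.order_mul hune hne
  rw [hmul, HahnSeries.order_one] at this
  omega

include hs hd in
theorem Sge_mE : Sge (1 - ((s*d : ℕ):ℤ)) (mE s d q σ pd) := by
  rw [mE]
  have h1 := (Sge_C σ).mul (Sge_C pd)
  have h2 := ((Sge_natCast d).mul ((Sge_qaE s q).pow (d-1))).mul (Sge_dqE s q)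
  refine (h1.mul h2).mono (le_of_eq ?_)
  have h5 : ((d-1 : ℕ):ℤ) = (d:ℤ) - 1 := by omega
  have h6 : ((s-1 : ℕ):ℤ) = (s:ℤ) - 1 := by omega
  have h7 : ((s*d : ℕ):ℤ) = (s:ℤ) * (d:ℤ) := by push_cast; ring
  rw [h5, h6, h7]
  ring
end OrderFacts

section CoeffLemmas
variable (s d : ℕ) (q p : ℕ → K) (σ pd : K)

theorem coeff_eq_of_dvd {N m : ℕ} {A B : RS} (h : (X:RS)^N ∣ A - B) (hm : m < N) :
    PowerSeries.coeff m A = PowerSeries.coeff m B := by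
  have := X_pow_dvd_iff.mp h m hm
  rw [map_sub, sub_eq_zero] at this
  exact this

theorem coeff_trunc_sum (w : ℕ → LS) (l n : ℕ) :
    PowerSeries.coeff n (∑ i ∈ range l, PowerSeries.C (w i) * X^i)
      = if n < l then w n else 0 := by
  rw [map_sum]
  split
  · rw [Finset.sum_eq_single n]
    · rw [coeff_C_mul, coeff_X_pow, if_pos rfl, mul_one]
    · intro i _ hne
      rw [coeff_C_mul, coeff_X_pow, if_neg (Ne.symm hne), mul_zero]
    · intro hc
      exact absurd (Finset.mem_range.mpr (by omega)) hc
  · apply Finset.sum_eq_zero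
    intro i hi
    rw [coeff_C_mul, coeff_X_pow, if_neg (by rw [Finset.mem_range] at hi; omega), mul_zero]

theorem trunc_congr (W : RS) (l : ℕ) :
    (X:RS)^(l+1) ∣ W - ((∑ i ∈ range l, PowerSeries.C (PowerSeries.coeff i W) * X^i)
      + PowerSeries.C (PowerSeries.coeff l W) * X^l) := by
  rw [X_pow_dvd_iff]
  intro m hm
  rw [map_sub, ← Finset.sum_range_succ (fun i => PowerSeries.C (PowerSeries.coeff i W) * X^i) l,
    coeff_trunc_sum, if_pos (by omega), sub_self]

theorem coeff_mul_Cw_Xl (B : RS) (w : LS) (l : ℕ) :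
    PowerSeries.coeff l (B * (PowerSeries.C w * X^l))
      = constantCoeff B * w := by
  have heq : B * (PowerSeries.C w * X^l) = (B * PowerSeries.C w) * X^l := by ring
  rw [heq]
  have := coeff_mul_X_pow (B * PowerSeries.C w) l 0
  rw [zero_add] at this
  rw [this, coeff_zero_eq_constantCoeff_apply, map_mul, constantCoeff_C]

theorem coeff_hsq (w : LS) (l : ℕ) (hl : 1 ≤ l) (c : RS) :
    PowerSeries.coeff l ((PowerSeries.C w * X^l)^2 * c) = 0 := by
  have hdvd : (X:RS)^(l+1) ∣ (PowerSeries.C w * X^l)^2 * c := by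
    have heq : (PowerSeries.C w * X^l)^2 * c
        = (PowerSeries.C w ^2 * X^(l-1) * c) * X^(l+1) := by
      rw [mul_pow, ← pow_mul]
      have : l * 2 = (l - 1) + (l+1) := by omega
      rw [this, pow_add]
      ring
    rw [heq]
    exact dvd_mul_left _ _
  exact X_pow_dvd_iff.mp hdvd l (by omega)

theorem coeff_X_h (w : LS) (l : ℕ) (c : RS) :
    PowerSeries.coeff l ((X * c) * (PowerSeries.C w * X^l)) = 0 := by
  have hdvd : (X:RS)^(l+1) ∣ (X * c) * (PowerSeries.C w * X^l) := by
    have heq : (X * c) * (PowerSeries.C w * X^l) = (c * PowerSeries.C w) * X^(l+1) := by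
      rw [pow_succ]
      ring
    rw [heq]
    exact dvd_mul_left _ _
  exact X_pow_dvd_iff.mp hdvd l (by omega)

/-- (★): the Taylor coefficient identity. -/
theorem coeff_Fr_taylor {Z : RS} (hcc : constantCoeff Z = zElem K) {l : ℕ} (hl : 1 ≤ l) :
    PowerSeries.coeff l (Fr s d q p σ pd Z)
      = mE s d q σ pd * PowerSeries.coeff l Z
        + PowerSeries.coeff l (Fr s d q p σ pd
            (∑ i ∈ range l, PowerSeries.C (PowerSeries.coeff i Z) * X^i)) := by
  set Y : RS := ∑ i ∈ range l, PowerSeries.C (PowerSeries.coeff i Z) * X^i with hY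
  set w : LS := PowerSeries.coeff l Z with hw
  set h : RS := PowerSeries.C w * X^l with hh
  have hccY : constantCoeff Y = zElem K := by
    rw [hY, ← coeff_zero_eq_constantCoeff_apply, coeff_trunc_sum, if_pos (by omega),
      coeff_zero_eq_constantCoeff_apply, hcc]
  have hcch : constantCoeff h = 0 := by
    rw [hh, ← coeff_zero_eq_constantCoeff_apply, coeff_C_mul, coeff_X_pow, if_neg (by omega),
      mul_zero]
  have hccYh : constantCoeff (Y + h) = zElem K := by rw [map_add, hccY, hcch, add_zero]
  -- step 1 : coeff l (Fr Z) = coeff l (Fr (Y + h))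
  have h1 : PowerSeries.coeff l (Fr s d q p σ pd Z)
      = PowerSeries.coeff l (Fr s d q p σ pd (Y + h)) := by
    apply coeff_eq_of_dvd (N := l+1) _ (by omega)
    exact dvd_Fr_sub s d q p σ pd hcc hccYh (trunc_congr Z l)
  -- step 2 : Taylor expansion of Qr
  choose ct hct using fun i : ℕ => taylor_pow Y h i
  have h2 : Qr s q (Y + h) = Qr s q Y + DQr s q Y * h
      + h^2 * (∑ i ∈ Icc 1 s, cK K (q i) * ct i) := by
    rw [Qr, Qr, DQr, Finset.sum_mul, Finset.mul_sum, ← Finset.sum_add_distrib,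
      ← Finset.sum_add_distrib]
    refine Finset.sum_congr rfl fun i _ => ?_
    rw [hct i]
    ring
  set c1 : RS := ∑ i ∈ Icc 1 s, cK K (q i) * ct i with hc1
  -- step 3 : Taylor expansion of Qr^d
  obtain ⟨c2, hc2⟩ := taylor_pow (Qr s q Y) (DQr s q Y * h + h^2 * c1) d
  have h3 : Qr s q (Y + h) ^ d = Qr s q Y ^ d
      + (d : RS) * Qr s q Y ^ (d-1) * DQr s q Y * h
      + h^2 * ((d : RS) * Qr s q Y ^ (d-1) * c1 + (DQr s q Y + h * c1)^2 * c2) := by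
    have h2' : Qr s q (Y + h) = Qr s q Y + (DQr s q Y * h + h^2 * c1) := by
      rw [h2]; ring
    rw [h2', hc2]
    ring
  -- step 4 : Ptr factorization
  have h4 : Ptr d p (Qr s q (Y + h)) = Ptr d p (Qr s q Y)
      + h * ((∑ j ∈ Icc 1 (d-1), cK K (p j) * (∑ i ∈ range j,
          Qr s q (Y+h)^i * Qr s q Y^(j-1-i))) * (DQr s q Y + h * c1)) := by
    have hdiff : ∀ j : ℕ, Qr s q (Y+h)^j - Qr s q Y^j
        = (∑ i ∈ range j, Qr s q (Y+h)^i * Qr s q Y^(j-1-i)) * (Qr s q (Y+h) - Qr s q Y) :=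
      fun j => pow_sub_pow _ _ j
    have hQd : Qr s q (Y + h) - Qr s q Y = h * (DQr s q Y + h * c1) := by
      rw [h2]; ring
    rw [Ptr, Ptr, Finset.sum_mul, Finset.mul_sum, ← Finset.sum_add_distrib]
    refine Finset.sum_congr rfl fun j _ => ?_
    have := hdiff j
    rw [hQd] at this
    have hj : Qr s q (Y+h)^j = Qr s q Y^j
        + (∑ i ∈ range j, Qr s q (Y+h)^i * Qr s q Y^(j-1-i)) * (h * (DQr s q Y + h * c1)) := by
      linear_combination this
    rw [hj]
    ring
  -- step 5 : put everything together
  have h5 : Fr s d q p σ pd (Y + h) = Fr s d q p σ pd Y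
      + (cK K σ * cK K pd * ((d : RS) * Qr s q Y ^ (d-1) * DQr s q Y)) * h
      + (cK K σ * cK K pd * ((d : RS) * Qr s q Y ^ (d-1) * c1 + (DQr s q Y + h * c1)^2 * c2))
          * h^2
      + (X * (cK K σ * ((∑ j ∈ Icc 1 (d-1), cK K (p j) * (∑ i ∈ range j,
          Qr s q (Y+h)^i * Qr s q Y^(j-1-i))) * (DQr s q Y + h * c1)))) * h := by
    rw [Fr, Fr, h3, h4]
    ring
  rw [h1, h5]
  rw [map_add, map_add, map_add]
  have e1 : PowerSeries.coeff l ((cK K σ * cK K pd * ((d : RS) * Qr s q Y ^ (d-1)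
      * DQr s q Y)) * h) = mE s d q σ pd * w := by
    rw [hh, coeff_mul_Cw_Xl, mE]
    congr 1
    rw [map_mul, map_mul, map_mul, map_mul, map_pow]
    rw [cK_eq, cK_eq, constantCoeff_C, constantCoeff_C, cc_Qr s q hccY, cc_DQr s q hccY,
      map_natCast]
  have e2 : PowerSeries.coeff l ((cK K σ * cK K pd * ((d : RS) * Qr s q Y ^ (d-1) * c1
      + (DQr s q Y + h * c1)^2 * c2)) * h^2) = 0 := by
    rw [hh, mul_comm]
    exact coeff_hsq w l hl _
  have e3 : PowerSeries.coeff l ((X * (cK K σ * ((∑ j ∈ Icc 1 (d-1), cK K (p j)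
      * (∑ i ∈ range j, Qr s q (Y+h)^i * Qr s q Y^(j-1-i))) * (DQr s q Y + h * c1)))) * h)
      = 0 := by
    rw [hh]
    exact coeff_X_h w l _
  rw [e1, e2, e3, add_zero, add_zero]
  ring

/-- the exp-side coefficient identity. -/
theorem coeff_exp_side {Z : RS} (hcc : constantCoeff Z = zElem K)
    (hfix : Z = PsiS s d q p σ pd Z) {l : ℕ} (hl : 1 ≤ l) :
    PowerSeries.coeff l Z
      = zElem K * (PowerSeries.coeff l (Fr s d q p σ pd Z)
          + ∑ k ∈ Icc 2 l, ((k.factorial : LS))⁻¹ * PowerSeries.coeff l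
              ((∑ j ∈ range l, PowerSeries.C
                (PowerSeries.coeff j (Fr s d q p σ pd Z)) * X^j) ^ k)) := by
  set G : RS := Fr s d q p σ pd Z with hG
  set Glow : RS := ∑ j ∈ range l, PowerSeries.C (PowerSeries.coeff j G) * X^j with hGlow
  set w : LS := PowerSeries.coeff l G with hw
  set h : RS := PowerSeries.C w * X^l with hh
  have hccG : constantCoeff G = 0 := cc_Fr s d q p σ pd hcc
  -- coefficient of G^k for 2 ≤ k
  have hGk : ∀ k, 2 ≤ k → PowerSeries.coeff l (G ^ k)
      = PowerSeries.coeff l (Glow ^ k) := by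
    intro k hk
    have hcongr : PowerSeries.coeff l (G ^ k)
        = PowerSeries.coeff l ((Glow + h) ^ k) := by
      apply coeff_eq_of_dvd (N := l+1) _ (by omega)
      exact dvd_pow_sub' (trunc_congr G l) k
    obtain ⟨c, hc⟩ := taylor_pow Glow h k
    have hmid : PowerSeries.coeff l ((k : RS) * Glow ^ (k-1) * h) = 0 := by
      rw [hh, coeff_mul_Cw_Xl, map_mul, map_pow]
      have : constantCoeff Glow = 0 := by
        rw [hGlow, ← coeff_zero_eq_constantCoeff_apply, coeff_trunc_sum, if_pos (by omega),
          hG, coeff_zero_eq_constantCoeff_apply, hccG]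
      rw [this, zero_pow (by omega), mul_zero, zero_mul]
    rw [hcongr, hc, map_add, map_add, hmid, add_zero]
    rw [hh, coeff_hsq w l hl c, add_zero]
  -- expand the fixed point equation
  have hcoeff : PowerSeries.coeff l Z
      = zElem K * PowerSeries.coeff l (pexpL _ G) := by
    conv_lhs => rw [hfix]
    rw [PsiS, zS, coeff_C_mul, ← hG]
  rw [hcoeff, coeff_pexpL]
  congr 1
  have hsplit : range (l+1) = insert 0 (insert 1 (Icc 2 l)) := by
    ext i
    simp only [Finset.mem_range, Finset.mem_insert, Finset.mem_Icc]
    omega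
  rw [hsplit, Finset.sum_insert (by simp), Finset.sum_insert (by simp)]
  have t0 : ((Nat.factorial 0 : LS))⁻¹ * PowerSeries.coeff l (G ^ 0) = 0 := by
    rw [pow_zero, coeff_one, if_neg (by omega), mul_zero]
  have t1 : ((Nat.factorial 1 : LS))⁻¹ * PowerSeries.coeff l (G ^ 1) = w := by
    rw [pow_one, Nat.factorial_one, Nat.cast_one, inv_one, one_mul, hw]
  rw [t0, t1, zero_add]
  congr 1
  refine Finset.sum_congr rfl fun k hk => ?_
  rw [hGk k (Finset.mem_Icc.mp hk).1]
end CoeffLemmas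

section MainVal
variable [CharZero K] (s d : ℕ) (q p : ℕ → K) (σ pd : K)

/-- valuation bound for `Fr` applied to a truncation-type series. -/
theorem SgeS_FrY (hs : 1 ≤ s) (hd : 2 ≤ d) {Y : RS} (hSY : SgeS (-1) Y)
    (hYz : SgeS 0 (Y - zS (K := K))) :
    SgeS (1 - ((s*d : ℕ):ℤ)) (Fr s d q p σ pd Y) := by
  have hA1 : ((s-1 : ℕ):ℤ) = (s:ℤ) - 1 := by omega
  have hD1 : ((d-1 : ℕ):ℤ) = (d:ℤ) - 1 := by omega
  have hSD : ((s*d : ℕ):ℤ) = (s:ℤ) * (d:ℤ) := by push_cast; ring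
  have hzS' : SgeS (-1) (zS (K := K)) := SgeS_zS
  have hQ : ∀ {U : RS}, SgeS (-1) U → SgeS (-(s:ℤ)) (Qr s q U) := by
    intro U hU
    rw [Qr]
    apply SgeS.sum
    intro i hi
    have hil := (Finset.mem_Icc.mp hi).2
    refine ((SgeS_cK (q i)).mul (hU.pow i)).mono ?_
    omega
  have hQY := hQ hSY
  have hQz := hQ hzS'
  -- difference Qr Y - Qr zS
  have hfac : Qr s q Y - Qr s q (zS (K := K))
      = (∑ i ∈ Icc 1 s, cK K (q i) * (∑ j ∈ range i, Y^j * (zS (K := K))^(i-1-j)))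
        * (Y - zS (K := K)) := by
    rw [Qr, Qr, ← Finset.sum_sub_distrib, Finset.sum_mul]
    refine Finset.sum_congr rfl fun i _ => ?_
    rw [← mul_sub, pow_sub_pow]
    ring
  have hQdiff : SgeS (-((s-1 : ℕ):ℤ)) (Qr s q Y - Qr s q (zS (K := K))) := by
    rw [hfac]
    have hbig : SgeS (-((s-1 : ℕ):ℤ))
        (∑ i ∈ Icc 1 s, cK K (q i) * (∑ j ∈ range i, Y^j * (zS (K := K))^(i-1-j))) := by
      apply SgeS.sum
      intro i hi
      have hil := (Finset.mem_Icc.mp hi).2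
      have hinner : SgeS (-((s-1 : ℕ):ℤ))
          (∑ j ∈ range i, Y^j * (zS (K := K))^(i-1-j)) := by
        apply SgeS.sum
        intro j hj
        have hji := Finset.mem_range.mp hj
        refine ((hSY.pow j).mul (hzS'.pow (i-1-j))).mono ?_
        have hc1 : ((i-1-j : ℕ):ℤ) = (i:ℤ) - 1 - (j:ℤ) := by omega
        rw [hc1]
        omega
      refine ((SgeS_cK (q i)).mul hinner).mono (by omega)
    have := hbig.mul hYz
    rwa [add_zero] at this
  -- power difference
  have hfacd : Qr s q Y ^ d - Qr s q (zS (K := K)) ^ d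
      = (∑ i ∈ range d, Qr s q Y ^ i * Qr s q (zS (K := K)) ^ (d-1-i))
        * (Qr s q Y - Qr s q (zS (K := K))) := pow_sub_pow _ _ d
  have hGam : SgeS (-(s:ℤ) * ((d:ℤ) - 1))
      (∑ i ∈ range d, Qr s q Y ^ i * Qr s q (zS (K := K)) ^ (d-1-i)) := by
    apply SgeS.sum
    intro i hi
    have hid := Finset.mem_range.mp hi
    refine ((hQY.pow i).mul (hQz.pow (d-1-i))).mono (le_of_eq ?_)
    have hc1 : ((d-1-i : ℕ):ℤ) = (d:ℤ) - 1 - (i:ℤ) := by omega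
    rw [hc1]
    ring
  have hpowdiff : SgeS (1 - ((s*d : ℕ):ℤ)) (Qr s q Y ^ d - Qr s q (zS (K := K)) ^ d) := by
    rw [hfacd]
    refine (hGam.mul hQdiff).mono (le_of_eq ?_)
    rw [hA1, hSD]
    ring
  -- Ptr part
  have hPtr : SgeS (-(s:ℤ) * ((d:ℤ) - 1)) (Ptr d p (Qr s q Y)) := by
    rw [Ptr]
    apply SgeS.sum
    intro j hj
    have hjd := (Finset.mem_Icc.mp hj).2
    refine ((SgeS_cK (p j)).mul (hQY.pow j)).mono ?_
    have h1 : ((j:ℤ)) ≤ (d:ℤ) - 1 := by omega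
    have h2 : (-(s:ℤ)) ≤ 0 := by omega
    have h3 := mul_le_mul_of_nonpos_right h1 h2
    have h4 : -(s:ℤ) * ((d:ℤ)-1) = ((d:ℤ)-1) * (-(s:ℤ)) := by ring
    linarith
  -- assemble
  rw [Fr]
  apply SgeS.add
  · have := ((SgeS_cK σ).mul (SgeS_cK pd)).mul hpowdiff
    refine this.mono (by omega)
  · have := (SgeS_X.mul (SgeS_cK σ)).mul hPtr
    refine this.mono ?_
    have h2 : (1:ℤ) ≤ (s:ℤ) := by omega
    rw [hSD]
    nlinarith [Int.ofNat_nonneg d]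

theorem val_main (hs : 1 ≤ s) (hd : 2 ≤ d) (hσ : σ ≠ 0) (hpd : pd ≠ 0) (hqs : q s ≠ 0)
    {Z : RS} (hcc : constantCoeff Z = zElem K) (hfix : Z = PsiS s d q p σ pd Z) :
    ∀ l : ℕ, (1 ≤ l → Sge 0 (PowerSeries.coeff l Z))
      ∧ Sge 0 (PowerSeries.coeff l (Fr s d q p σ pd Z)) := by
  intro l
  induction l using Nat.strong_induction_on with
  | _ l IH =>
  rcases Nat.eq_zero_or_pos l with rfl | hl
  · constructor
    · omega
    · rw [coeff_zero_eq_constantCoeff_apply, cc_Fr s d q p σ pd hcc]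
      exact Sge_zero 0
  · -- l ≥ 1
    have hsd1 : 1 ≤ s * d := by
      calc 1 = 1 * 1 := rfl
        _ ≤ s * d := Nat.mul_le_mul hs (by omega)
    set Y : RS := ∑ i ∈ range l, PowerSeries.C (PowerSeries.coeff i Z) * X^i with hY
    have hSY : SgeS (-1) Y := by
      intro n
      rw [hY, coeff_trunc_sum]
      split
      · rcases Nat.eq_zero_or_pos n with rfl | hn
        · rw [coeff_zero_eq_constantCoeff_apply, hcc]
          exact Sge_a
        · exact ((IH n (by omega)).1 hn).mono (by omega)
      · exact Sge_zero _
    have hYz : SgeS 0 (Y - zS (K := K)) := by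
      intro n
      rw [map_sub, hY, coeff_trunc_sum]
      rcases Nat.eq_zero_or_pos n with rfl | hn
      · have hz0 : PowerSeries.coeff 0 (zS (K := K)) = zElem K := by
          rw [zS, coeff_zero_eq_constantCoeff_apply, constantCoeff_C]
        rw [if_pos (by omega), hz0, coeff_zero_eq_constantCoeff_apply, hcc, sub_self]
        exact Sge_zero _
      · have hzn : PowerSeries.coeff n (zS (K := K)) = 0 := by
          rw [zS, coeff_C, if_neg (by omega)]
        rw [hzn, sub_zero]
        split
        · exact (IH n (by omega)).1 hn
        · exact Sge_zero _
    have hρ : Sge (1 - ((s*d : ℕ):ℤ))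
        (PowerSeries.coeff l (Fr s d q p σ pd Y)) :=
      SgeS_FrY s d q p σ pd hs hd hSY hYz l
    have hstar := coeff_Fr_taylor s d q p σ pd hcc hl
    rw [← hY] at hstar
    set Tl : LS := ∑ k ∈ Icc 2 l, ((k.factorial : LS))⁻¹ * PowerSeries.coeff l
        ((∑ j ∈ range l, PowerSeries.C
          (PowerSeries.coeff j (Fr s d q p σ pd Z)) * X^j) ^ k) with hTldef
    have hexp := coeff_exp_side s d q p σ pd hcc hfix hl
    rw [← hTldef] at hexp
    have hTl : Sge 0 Tl := by
      rw [hTldef]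
      apply Sge.sum
      intro k hk
      have hfact : Sge 0 (((k.factorial : LS))⁻¹) := by
        rw [← map_natCast (HahnSeries.C : K →+* LS) k.factorial, C_inv]
        exact Sge_C _
      have hGlow : SgeS 0 ((∑ j ∈ range l, PowerSeries.C
          (PowerSeries.coeff j (Fr s d q p σ pd Z)) * X^j) : RS) := by
        intro n
        rw [coeff_trunc_sum]
        split
        · exact (IH n (by rename_i hnl; omega)).2
        · exact Sge_zero _
      have := hfact.mul ((hGlow.pow k) l)
      simpa using this
    have hmm := hmm_ne s d q σ pd hs hd hσ hpd hqs
    have hsolve : (1 - mmE s d q σ pd) * PowerSeries.coeff l Z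
        = zElem K * (PowerSeries.coeff l (Fr s d q p σ pd Y) + Tl) := by
      rw [mmE]
      linear_combination hexp + zElem K * hstar
    have hZl : PowerSeries.coeff l Z
        = uE s d q σ pd * (zElem K * (PowerSeries.coeff l (Fr s d q p σ pd Y) + Tl)) := by
      rw [uE, ← hsolve, inv_mul_cancel_left₀ hmm]
    have hcZ : Sge 0 (PowerSeries.coeff l Z) := by
      rw [hZl]
      have := (Sge_uE s d q σ pd hs hd hσ hpd hqs).mul
        (Sge_a.mul ((hρ.add (hTl.mono (by omega)))))
      refine this.mono (by omega)
    refine ⟨fun _ => hcZ, ?_⟩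
    -- Fr coefficient
    have hGl : PowerSeries.coeff l (Fr s d q p σ pd Z)
        = (zElem K)⁻¹ * PowerSeries.coeff l Z - Tl := by
      have h2 := congrArg (fun x => (zElem K)⁻¹ * x) hexp
      simp only [← mul_assoc, inv_mul_cancel₀ zElem_ne, one_mul] at h2
      linear_combination -h2
    rw [hGl]
    exact ((Sge_ainv.mul hcZ).mono (by omega)).sub hTl

end MainVal

theorem mem_range_of_Sge {f : LS} (hf : Sge 0 f) :
    f ∈ Set.range (HahnSeries.ofPowerSeries ℤ K) := by
  refine ⟨PowerSeries.mk (fun n => f.coeff n), ?_⟩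
  ext n
  rcases le_or_gt 0 n with hn | hn
  · obtain ⟨k, rfl⟩ := Int.eq_ofNat_of_zero_le hn
    rw [HahnSeries.ofPowerSeries_apply_coeff, coeff_mk]
  · rw [hf n hn, HahnSeries.ofPowerSeries_apply, HahnSeries.embDomain_notin_range]
    intro ⟨k, hk⟩
    simp only [Nat.castOrderEmbedding_apply] at hk
    omega

end
end St7

theorem statement7 (K : Type*) [Field K] [CharZero K] (s d : ℕ) (hs : 1 ≤ s) (hd : 2 ≤ d)
    (q p : ℕ → K) (σ pd : K) (hne : σ * pd * q s ≠ 0) :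
    -- `Q(Y) = Σ_{i=1}^s q_i Y^i`, `P̃(Y) = Σ_{j=1}^{d−1} p_j Y^j`,
    -- evaluated on elements of `R = L⟦t⟧`:
    let L := LaurentSeries K
    let z : PowerSeries L := PowerSeries.C (zElem K)
    let Q : PowerSeries L → PowerSeries L := fun Y => ∑ i ∈ Finset.Icc 1 s, cK K (q i) * Y ^ i
    let Pt : PowerSeries L → PowerSeries L :=
      fun Y => ∑ j ∈ Finset.Icc 1 (d - 1), cK K (p j) * Y ^ j
    let SatEq : PowerSeries L → Prop := fun Z =>
      PowerSeries.constantCoeff Z = zElem K ∧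
        Z = z * pexpL L
          (cK K σ * cK K pd * (Q Z ^ d - Q z ^ d) + PowerSeries.X * cK K σ * Pt (Q Z))
    (∃! Z : PowerSeries L, SatEq Z) ∧
      ∀ Z : PowerSeries L, SatEq Z → ∀ l : ℕ,
        PowerSeries.coeff l (Z - z) ∈ Set.range (HahnSeries.ofPowerSeries ℤ K) := by
  intro L z Q Pt SatEq
  obtain ⟨hσ, hpd, hqs⟩ : σ ≠ 0 ∧ pd ≠ 0 ∧ q s ≠ 0 := by
    refine ⟨?_, ?_, ?_⟩ <;> intro hc <;> apply hne <;> rw [hc] <;> ring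
  have hmm := St7.hmm_ne s d q σ pd hs hd hσ hpd hqs
  constructor
  · refine ⟨St7.Zstar s d q p σ pd, ⟨St7.cc_Zstar s d q p σ pd, ?_⟩, ?_⟩
    · exact St7.Psi_fixed s d q p σ pd hmm
    · rintro Z ⟨h1, h2⟩
      exact St7.unique_fixed s d q p σ pd hmm h1 h2 (St7.cc_Zstar s d q p σ pd)
        (St7.Psi_fixed s d q p σ pd hmm)
  · rintro Z ⟨h1, h2⟩ l
    have hval := St7.val_main s d q p σ pd hs hd hσ hpd hqs h1 h2
    rcases Nat.eq_zero_or_pos l with rfl | hl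
    · have h0 : PowerSeries.coeff 0 (Z - z) = 0 := by
        rw [map_sub, coeff_zero_eq_constantCoeff_apply, coeff_zero_eq_constantCoeff_apply,
          h1, PowerSeries.constantCoeff_C, sub_self]
      rw [h0]
      exact ⟨0, map_zero _⟩
    · have hz : PowerSeries.coeff l (Z - z) = PowerSeries.coeff l Z := by
        rw [map_sub, PowerSeries.coeff_C, if_neg (by omega), sub_zero]
      rw [hz]
      exact St7.mem_range_of_Sge ((hval l).1 hl)
end
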